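/- arXiv:1108.5419 — 8 statements merged into one kernel-verified Lean document; each statement's English description precedes it below -/
import Mathlib

section
/- If g(z) = z + g₂z² + g₃z³ + ⋯ is analytic on the unit disk and starlike of order 1/2 (i.e., Re(zg'(z)/g(z)) > 1/2 on the disk), then |g₃ - g₂²/2| ≤ 1/2. -/
open Complex Metric

private lemma coeff_eq_iter {f : ℂ → ℂ} {p : FormalMultilinearSeries ℂ ℂ ℂ}
    (h : HasFPowerSeriesAt f p 0) (n : ℕ) :
    iteratedDeriv n f 0 = (n.factorial : ℂ) * p.coeff n := by
  obtain ⟨r, hr⟩ := h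
  have h1 := hr.factorial_smul (1:ℂ) n
  rw [iteratedDeriv_eq_iteratedFDeriv, ← h1, FormalMultilinearSeries.coeff, nsmul_eq_mul]
  norm_num

private lemma ev2_eq {f h : ℂ → ℂ} {c : ℂ} (he : f =ᶠ[nhds c] h) :
    iteratedDeriv 2 f c = iteratedDeriv 2 h c := by
  have h1 : deriv f =ᶠ[nhds c] deriv h := he.deriv
  have h2 := h1.deriv_eq
  simpa [iteratedDeriv_succ, iteratedDeriv_zero] using h2

private lemma d2_mul {f h : ℂ → ℂ} (hf : AnalyticOnNhd ℂ f (ball (0:ℂ) 1))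
    (hh : AnalyticOnNhd ℂ h (ball (0:ℂ) 1)) :
    iteratedDeriv 2 (fun z => f z * h z) 0 =
      iteratedDeriv 2 f 0 * h 0 + 2 * deriv f 0 * deriv h 0 + f 0 * iteratedDeriv 2 h 0 := by
  have h0B : (0:ℂ) ∈ ball (0:ℂ) 1 := mem_ball_self one_pos
  have hb : ball (0:ℂ) 1 ∈ nhds (0:ℂ) := isOpen_ball.mem_nhds h0B
  have e1 : deriv (fun z => f z * h z) =ᶠ[nhds (0:ℂ)]
      fun z => deriv f z * h z + f z * deriv h z := by
    filter_upwards [hb] with z hz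
    exact deriv_mul ((hf z hz).differentiableAt) ((hh z hz).differentiableAt)
  have e2 := e1.deriv_eq
  have hfd : DifferentiableAt ℂ f 0 := (hf 0 h0B).differentiableAt
  have hhd : DifferentiableAt ℂ h 0 := (hh 0 h0B).differentiableAt
  have hfd' : DifferentiableAt ℂ (deriv f) 0 := ((hf.deriv) 0 h0B).differentiableAt
  have hhd' : DifferentiableAt ℂ (deriv h) 0 := ((hh.deriv) 0 h0B).differentiableAt
  have e3 : deriv (fun z => deriv f z * h z + f z * deriv h z) 0 =
      deriv (deriv f) 0 * h 0 + deriv f 0 * deriv h 0 +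
        (deriv f 0 * deriv h 0 + f 0 * deriv (deriv h) 0) := by
    rw [deriv_fun_add (f := fun z => deriv f z * h z) (g := fun z => f z * deriv h z) (hfd'.mul hhd) (hfd.mul hhd'), deriv_fun_mul hfd' hhd, deriv_fun_mul hfd hhd']
  have key : iteratedDeriv 2 (fun z => f z * h z) 0 =
      deriv (deriv (fun z => f z * h z)) 0 := by
    simp [iteratedDeriv_succ, iteratedDeriv_zero]
  rw [key, e2, e3]
  have i2f : iteratedDeriv 2 f 0 = deriv (deriv f) 0 := by
    simp [iteratedDeriv_succ, iteratedDeriv_zero]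
  have i2h : iteratedDeriv 2 h 0 = deriv (deriv h) 0 := by
    simp [iteratedDeriv_succ, iteratedDeriv_zero]
  rw [i2f, i2h]; ring

private lemma d2_add {f h : ℂ → ℂ} (hf : AnalyticOnNhd ℂ f (ball (0:ℂ) 1))
    (hh : AnalyticOnNhd ℂ h (ball (0:ℂ) 1)) :
    iteratedDeriv 2 (fun z => f z + h z) 0 =
      iteratedDeriv 2 f 0 + iteratedDeriv 2 h 0 := by
  have h0B : (0:ℂ) ∈ ball (0:ℂ) 1 := mem_ball_self one_pos
  have hb : ball (0:ℂ) 1 ∈ nhds (0:ℂ) := isOpen_ball.mem_nhds h0B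
  have e1 : deriv (fun z => f z + h z) =ᶠ[nhds (0:ℂ)]
      fun z => deriv f z + deriv h z := by
    filter_upwards [hb] with z hz
    exact deriv_add ((hf z hz).differentiableAt) ((hh z hz).differentiableAt)
  have e2 := e1.deriv_eq
  have e3 : deriv (fun z => deriv f z + deriv h z) 0 =
      deriv (deriv f) 0 + deriv (deriv h) 0 :=
    deriv_add ((hf.deriv 0 h0B).differentiableAt) ((hh.deriv 0 h0B).differentiableAt)
  have key : iteratedDeriv 2 (fun z => f z + h z) 0 =
      deriv (deriv (fun z => f z + h z)) 0 := by
    simp [iteratedDeriv_succ, iteratedDeriv_zero]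
  rw [key, e2, e3]
  simp [iteratedDeriv_succ, iteratedDeriv_zero]

theorem starlike_half_coeff_bound (g : ℂ → ℂ)
    (hg : AnalyticOnNhd ℂ g (ball (0:ℂ) 1))
    (hg0 : g 0 = 0) (hg1 : deriv g 0 = 1)
    (hstar : ∀ z ∈ ball (0:ℂ) 1, z ≠ 0 → 1 / 2 < (z * deriv g z / g z).re)
    (g₂ g₃ : ℂ)
    (hg₂ : g₂ = iteratedDeriv 2 g 0 / 2)
    (hg₃ : g₃ = iteratedDeriv 3 g 0 / 6) :
    ‖g₃ - g₂ ^ 2 / 2‖ ≤ 1 / 2 := by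
  have h0B : (0:ℂ) ∈ ball (0:ℂ) 1 := mem_ball_self one_pos
  have hb : ball (0:ℂ) 1 ∈ nhds (0:ℂ) := isOpen_ball.mem_nhds h0B
  -- g is nonzero away from 0
  have hgz : ∀ z ∈ ball (0:ℂ) 1, z ≠ 0 → g z ≠ 0 := by
    intro z hz hz0 h0
    have := hstar z hz hz0
    rw [h0, div_zero] at this
    norm_num at this
  -- φ = dslope g 0
  set φ : ℂ → ℂ := dslope g 0 with hφdef
  have hφ0 : φ 0 = 1 := by simp [hφdef, dslope_same, hg1]
  have hφeq : ∀ z : ℂ, z ≠ 0 → φ z = g z / z := by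
    intro z hz
    rw [hφdef, dslope_of_ne _ hz, slope_def_field, hg0, sub_zero, sub_zero]
  have hφa : AnalyticOnNhd ℂ φ (ball (0:ℂ) 1) := by
    intro z hz
    rcases eq_or_ne z 0 with rfl | hz0
    · obtain ⟨p, hp⟩ := hg 0 h0B
      exact hp.has_fpower_series_dslope_fslope.analyticAt
    · have h1 : AnalyticAt ℂ (fun y => g y / y) z :=
        (hg z hz).div analyticAt_id hz0
      apply h1.congr
      filter_upwards [eventually_ne_nhds hz0] with y hy
      exact (hφeq y hy).symm
  have hφne : ∀ z ∈ ball (0:ℂ) 1, φ z ≠ 0 := by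
    intro z hz
    rcases eq_or_ne z 0 with rfl | hz0
    · rw [hφ0]; exact one_ne_zero
    · rw [hφeq z hz0]
      exact div_ne_zero (hgz z hz hz0) hz0
  have hgφ : ∀ z : ℂ, z ≠ 0 → g z = z * φ z := by
    intro z hz
    rw [hφeq z hz, mul_div_cancel₀ _ hz]
  -- p = deriv g / φ
  set p : ℂ → ℂ := fun z => deriv g z / φ z with hpdef
  have hdga : AnalyticOnNhd ℂ (deriv g) (ball (0:ℂ) 1) := hg.deriv
  have hpa : AnalyticOnNhd ℂ p (ball (0:ℂ) 1) := hdga.div hφa hφne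
  have hp0 : p 0 = 1 := by simp [hpdef, hφ0, hg1]
  have hpre : ∀ z ∈ ball (0:ℂ) 1, 1 / 2 < (p z).re := by
    intro z hz
    rcases eq_or_ne z 0 with rfl | hz0
    · rw [hp0]; norm_num
    · have h1 := hstar z hz hz0
      have h2 : z * deriv g z / g z = p z := by
        rw [hgφ z hz0, mul_div_mul_left _ _ hz0]
      rwa [h2] at h1
  -- power series of g and φ at 0
  obtain ⟨G, hG⟩ := hg 0 h0B
  have hΦ : HasFPowerSeriesAt φ G.fslope 0 := hG.has_fpower_series_dslope_fslope
  have h2g : iteratedDeriv 2 g 0 = 2 * g₂ := by rw [hg₂]; ring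
  have h3g : iteratedDeriv 3 g 0 = 6 * g₃ := by rw [hg₃]; ring
  have cG2 : G.coeff 2 = g₂ := by
    have := coeff_eq_iter hG 2
    rw [h2g] at this
    norm_num at this
    exact this.symm
  have cG3 : G.coeff 3 = g₃ := by
    have := coeff_eq_iter hG 3
    rw [h3g] at this
    have h6 : ((Nat.factorial 3 : ℕ) : ℂ) = 6 := by norm_num [Nat.factorial]
    rw [h6] at this
    linear_combination -this / 6
  have hφd1 : deriv φ 0 = g₂ := by
    have := coeff_eq_iter hΦ 1
    rw [FormalMultilinearSeries.coeff_fslope, cG2] at this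
    simpa [iteratedDeriv_one] using this
  have hφd2 : iteratedDeriv 2 φ 0 = 2 * g₃ := by
    have := coeff_eq_iter hΦ 2
    rw [FormalMultilinearSeries.coeff_fslope, cG3] at this
    norm_num at this
    exact this
  -- identity p * φ = deriv g near 0
  have hmulφ : (fun z => p z * φ z) =ᶠ[nhds (0:ℂ)] deriv g := by
    filter_upwards [hb] with z hz
    exact div_mul_cancel₀ _ (hφne z hz)
  -- first derivative of p at 0
  have hp1 : deriv p 0 = g₂ := by
    have e1 := hmulφ.deriv_eq
    have e2 : deriv (fun z => p z * φ z) 0 = deriv p 0 * φ 0 + p 0 * deriv φ 0 :=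
      deriv_fun_mul ((hpa 0 h0B).differentiableAt) ((hφa 0 h0B).differentiableAt)
    have e3 : deriv (deriv g) 0 = iteratedDeriv 2 g 0 := by
      simp [iteratedDeriv_succ, iteratedDeriv_zero]
    rw [e2, hφ0, hp0, hφd1] at e1
    rw [e3, h2g] at e1
    linear_combination e1
  -- second derivative of p at 0
  have hp2 : iteratedDeriv 2 p 0 = 4 * g₃ - 2 * g₂ ^ 2 := by
    have e1 := ev2_eq hmulφ
    have e2 := d2_mul hpa hφa
    have e3 : iteratedDeriv 2 (deriv g) 0 = iteratedDeriv 3 g 0 :=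
      (congrFun (iteratedDeriv_succ' (n := 2) (f := g)) 0).symm
    rw [e2, hφ0, hp0, hp1, hφd1, hφd2] at e1
    rw [e3, h3g] at e1
    linear_combination e1
  -- s z = p z + p (-z)
  set s : ℂ → ℂ := fun z => p z + p (-z) with hsdef
  have hnega : AnalyticOnNhd ℂ (fun z => p (-z)) (ball (0:ℂ) 1) := by
    have : AnalyticOnNhd ℂ (fun z : ℂ => -z) (ball (0:ℂ) 1) := analyticOnNhd_id.neg
    refine hpa.comp this ?_
    intro z hz
    simpa [mem_ball_zero_iff] using mem_ball_zero_iff.mp hz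
  have hsa : AnalyticOnNhd ℂ s (ball (0:ℂ) 1) := hpa.add hnega
  have hs0 : s 0 = 2 := by norm_num [hsdef, hp0]
  have hsre : ∀ z ∈ ball (0:ℂ) 1, 1 < (s z).re := by
    intro z hz
    have h1 := hpre z hz
    have h2 : -z ∈ ball (0:ℂ) 1 := by
      simpa [mem_ball_zero_iff] using mem_ball_zero_iff.mp hz
    have h3 := hpre (-z) h2
    simp only [hsdef, add_re]
    linarith
  have hsne : ∀ z ∈ ball (0:ℂ) 1, s z ≠ 0 := by
    intro z hz h0
    have := hsre z hz
    rw [h0] at this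
    norm_num at this
  have hs1 : deriv s 0 = 0 := by
    have e1 : deriv s 0 = deriv p 0 + deriv (fun z => p (-z)) 0 :=
      deriv_fun_add ((hpa 0 h0B).differentiableAt) ((hnega 0 h0B).differentiableAt)
    rw [deriv_comp_neg, neg_zero, hp1] at e1
    rw [e1]; ring
  have hs2 : iteratedDeriv 2 s 0 = 2 * (4 * g₃ - 2 * g₂ ^ 2) := by
    have e1 := d2_add hpa hnega
    have e2 : iteratedDeriv 2 (fun z => p (-z)) 0 = iteratedDeriv 2 p 0 := by
      rw [iteratedDeriv_comp_neg, neg_zero]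
      simp
    rw [e2, hp2] at e1
    rw [hsdef]
    rw [e1]; ring
  -- w = 1 - 2 / s
  set w : ℂ → ℂ := fun z => 1 - 2 / s z with hwdef
  have hwa : AnalyticOnNhd ℂ w (ball (0:ℂ) 1) :=
    analyticOnNhd_const.sub (analyticOnNhd_const.div hsa hsne)
  have hw0 : w 0 = 0 := by
    norm_num [hwdef, hs0]
  have hwlt : ∀ z ∈ ball (0:ℂ) 1, ‖w z‖ < 1 := by
    intro z hz
    have hsz := hsne z hz
    have hre := hsre z hz
    have e1 : w z = (s z - 2) / s z := by
      rw [hwdef]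
      field_simp
    have h2 : ‖s z - 2‖ ^ 2 < ‖s z‖ ^ 2 := by
      rw [Complex.sq_norm, Complex.sq_norm]
      simp only [normSq_apply, sub_re, sub_im]
      simp only [Complex.re_ofNat, Complex.im_ofNat]
      nlinarith [sq_nonneg ((s z).im)]
    have h3 : ‖s z - 2‖ < ‖s z‖ :=
      lt_of_pow_lt_pow_left₀ 2 (norm_nonneg _) h2
    rw [e1, norm_div, div_lt_one (norm_pos_iff.mpr hsz)]
    exact h3
  have hwd : DifferentiableOn ℂ w (ball (0:ℂ) 1) := hwa.differentiableOn
  -- derivatives of w via w * s = s - 2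
  have hws : (fun z => w z * s z) =ᶠ[nhds (0:ℂ)] (fun z => s z - 2) := by
    filter_upwards [hb] with z hz
    have := hsne z hz
    rw [hwdef]
    field_simp
  have hw1 : deriv w 0 = 0 := by
    have e1 := hws.deriv_eq
    have e2 : deriv (fun z => w z * s z) 0 = deriv w 0 * s 0 + w 0 * deriv s 0 :=
      deriv_fun_mul ((hwa 0 h0B).differentiableAt) ((hsa 0 h0B).differentiableAt)
    have e3 : deriv (fun z => s z - 2) 0 = deriv s 0 := deriv_sub_const 2
    rw [e2, hw0, hs0, hs1, e3, hs1] at e1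
    simpa using e1
  have hw2 : iteratedDeriv 2 w 0 = 4 * g₃ - 2 * g₂ ^ 2 := by
    have e1 := ev2_eq hws
    have e2 := d2_mul hwa hsa
    have e3 : iteratedDeriv 2 (fun z => s z - 2) 0 = iteratedDeriv 2 s 0 := by
      have : deriv (fun z => s z - 2) = deriv s := by
        funext x; exact deriv_sub_const 2
      simp [iteratedDeriv_succ, iteratedDeriv_zero, this]
    rw [e2, hw0, hs0, hw1, hs1, e3, hs2] at e1
    linear_combination e1 / 2
  -- Schwarz lemma
  set w₁ : ℂ → ℂ := dslope w 0 with hw₁def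
  have hmaps : Set.MapsTo w (ball (0:ℂ) 1) (ball (w 0) 1) := by
    intro z hz
    rw [hw0, mem_ball_zero_iff]
    exact hwlt z hz
  have hw₁b : ∀ z ∈ ball (0:ℂ) 1, ‖w₁ z‖ ≤ 1 := by
    intro z hz
    have := Complex.norm_dslope_le_div_of_mapsTo_ball hwd (hmaps.mono_right ball_subset_closedBall) hz
    simpa using this
  have hw₁0 : w₁ 0 = 0 := by
    rw [hw₁def, dslope_same, hw1]
  have hw₁d : DifferentiableOn ℂ w₁ (ball (0:ℂ) 1) :=
    (differentiableOn_dslope hb).mpr hwd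
  have hD : ‖deriv w₁ 0‖ ≤ 1 := by
    have key : ∀ ε : ℝ, 0 < ε → ‖deriv w₁ 0‖ ≤ 1 + ε := by
      intro ε hε
      have hmaps2 : Set.MapsTo w₁ (ball (0:ℂ) 1) (ball (w₁ 0) (1 + ε)) := by
        intro z hz
        rw [hw₁0, mem_ball_zero_iff]
        exact lt_of_le_of_lt (hw₁b z hz) (by linarith)
      have := Complex.norm_deriv_le_div_of_mapsTo_ball hw₁d (hmaps2.mono_right ball_subset_closedBall) one_pos
      simpa using this
    linarith [le_of_forall_pos_le_add (fun ε hε => key ε hε)]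
  -- compute deriv w₁ 0
  obtain ⟨q, hq⟩ := hwa 0 h0B
  have hq1 : deriv w₁ 0 = q.coeff 2 := by
    have h1 : deriv w₁ 0 = q.fslope.coeff 1 :=
      (hq.has_fpower_series_dslope_fslope).deriv
    rw [h1, FormalMultilinearSeries.coeff_fslope]
  have hq2 : q.coeff 2 = 2 * g₃ - g₂ ^ 2 := by
    have := coeff_eq_iter hq 2
    rw [hw2] at this
    norm_num at this
    linear_combination -this / 2
  have hfinal : ‖2 * g₃ - g₂ ^ 2‖ ≤ 1 := by
    rw [← hq2, ← hq1]
    exact hD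
  have : g₃ - g₂ ^ 2 / 2 = (2 * g₃ - g₂ ^ 2) / 2 := by ring
  rw [this, norm_div]
  simp only [Complex.norm_ofNat]
  linarith
end

section
/- If g is starlike of order 1/2 on the unit disk (normalized: g(0)=0, g'(0)=1, Re(zg'(z)/g(z)) > 1/2), then the function G(z) = -g(z)g(-z)/z (with G(0)=0) is an odd starlike function on the unit disk, i.e., G(-z) = -G(z) and Re(zG'(z)/G(z)) > 0 for z ≠ 0. -/
open Complex Metric

theorem odd_starlike_of_starlike_half (g : ℂ → ℂ)
    (hg : AnalyticOnNhd ℂ g (ball (0:ℂ) 1))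
    (hg0 : g 0 = 0) (hg1 : deriv g 0 = 1)
    (hstar : ∀ z ∈ ball (0:ℂ) 1, z ≠ 0 → 1 / 2 < (z * deriv g z / g z).re)
    (G : ℂ → ℂ)
    (hG : ∀ z : ℂ, z ≠ 0 → G z = -(g z * g (-z)) / z)
    (hG0 : G 0 = 0) :
    AnalyticOnNhd ℂ G (ball (0:ℂ) 1) ∧
    (∀ z ∈ ball (0:ℂ) 1, G (-z) = -G z) ∧
    (∀ z ∈ ball (0:ℂ) 1, z ≠ 0 → 0 < (z * deriv G z / G z).re) := by
  have hball : ∀ z : ℂ, z ∈ ball (0:ℂ) 1 → -z ∈ ball (0:ℂ) 1 := by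
    intro z hz
    simpa [mem_ball, dist_eq_norm] using hz
  -- dslope g 0 is analytic on the ball
  have hds : AnalyticOnNhd ℂ (dslope g 0) (ball (0:ℂ) 1) := by
    intro z hz
    by_cases h0 : z = 0
    · subst h0
      obtain ⟨p, hp⟩ := hg 0 (by simp)
      exact ⟨p.fslope, hp.has_fpower_series_dslope_fslope⟩
    · have : AnalyticAt ℂ (fun w => (g w - g 0) / (w - 0)) z :=
        ((hg z hz).sub analyticAt_const).div (analyticAt_id.sub analyticAt_const)
          (by simpa using h0)
      apply this.congr
      filter_upwards [isOpen_compl_singleton.mem_nhds (by simpa using h0 :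
        z ∈ {(0:ℂ)}ᶜ)] with w hw
      rw [dslope_of_ne _ (by simpa using hw), slope_def_field]
  -- G equals an analytic function
  have hGeq : G = fun z => g z * dslope g 0 (-z) := by
    funext z
    by_cases h0 : z = 0
    · simp [h0, hG0, hg0]
    · rw [hG z h0, dslope_of_ne _ (by simpa using h0), slope_def_field, hg0]
      rw [sub_zero, sub_zero, div_neg, mul_neg, neg_div, mul_div_assoc]
  refine ⟨?_, ?_, ?_⟩
  · rw [hGeq]
    intro z hz
    exact (hg z hz).mul ((hds (-z) (hball z hz)).comp (analyticAt_id.neg))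
  · intro z hz
    by_cases h0 : z = 0
    · simp [h0, hG0]
    · rw [hG (-z) (by simpa using h0), hG z h0]
      field_simp
  · intro z hz hz0
    have hnz : -z ∈ ball (0:ℂ) 1 := hball z hz
    have hnz0 : -z ≠ 0 := by simpa using hz0
    have ha : g z ≠ 0 := by
      intro h
      have := hstar z hz hz0
      rw [h] at this
      simp at this
      linarith
    have hb : g (-z) ≠ 0 := by
      intro h
      have := hstar (-z) hnz hnz0
      rw [h] at this
      simp at this
      linarith
    set a := g z
    set b := g (-z)
    set a' := deriv g z
    set b' := deriv g (-z)
    -- derivative of G at z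
    have h1 : HasDerivAt g a' z := (hg z hz).differentiableAt.hasDerivAt
    have h2 : HasDerivAt (fun w => g (-w)) (b' * (-1)) z :=
      HasDerivAt.comp z ((hg (-z) hnz).differentiableAt.hasDerivAt) (hasDerivAt_neg z)
    have h3 : HasDerivAt (fun w => -(g w * g (-w)) / w)
        ((-(a' * b + a * (b' * (-1))) * z - -(a * b) * 1) / z ^ 2) z :=
      ((h1.mul h2).neg).div (hasDerivAt_id z) hz0
    have hderiv : deriv G z = (-(a' * b + a * (b' * (-1))) * z - -(a * b) * 1) / z ^ 2 := by
      rw [← h3.deriv]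
      apply Filter.EventuallyEq.deriv_eq
      filter_upwards [isOpen_compl_singleton.mem_nhds (by simpa using hz0 :
        z ∈ {(0:ℂ)}ᶜ)] with w hw
      exact hG w (by simpa using hw)
    have key : z * deriv G z / G z = z * a' / a + (-z) * b' / b - 1 := by
      rw [hderiv, hG z hz0]
      rw [show g z = a from rfl, show g (-z) = b from rfl]
      field_simp
      ring
    rw [key]
    have H1 := hstar z hz hz0
    have H2 := hstar (-z) hnz hnz0
    simp only [Complex.sub_re, Complex.add_re, Complex.one_re] at *
    linarith
end

section
/- If G is an odd normalized starlike function on the unit disk (G(0)=0, G'(0)=1, G(-z)=-G(z), Re(zG'(z)/G(z)) > 0), then for |z| = r < 1, r/(1+r²) ≤ |G(z)| ≤ r/(1-r²). -/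
open Complex Metric

/-- derivative of log of modulus -/
lemma hasDerivAt_log_abs {g : ℝ → ℂ} {g' : ℂ} {s : ℝ} (hg : HasDerivAt g g' s)
    (hne : g s ≠ 0) :
    HasDerivAt (fun t => Real.log (‖g t‖)) ((g' / g s).re) s := by
  have key : ∀ t, Real.log (‖g t‖) = Real.log (Complex.normSq (g t)) / 2 := by
    intro t
    rw [Complex.norm_def, Real.log_sqrt (Complex.normSq_nonneg _)]
  have hre : HasDerivAt (fun t => (g t).re) g'.re s :=
    Complex.reCLM.hasFDerivAt.comp_hasDerivAt s hg
  have him : HasDerivAt (fun t => (g t).im) g'.im s :=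
    Complex.imCLM.hasFDerivAt.comp_hasDerivAt s hg
  have hnsq : HasDerivAt (fun t => Complex.normSq (g t))
      (g'.re * (g s).re + (g s).re * g'.re + (g'.im * (g s).im + (g s).im * g'.im)) s := by
    have := (hre.mul hre).add (him.mul him)
    refine this.congr_of_eventuallyEq (Filter.Eventually.of_forall fun t => ?_)
    simp [Complex.normSq_apply]
  have hN : Complex.normSq (g s) ≠ 0 := by
    simpa [Complex.normSq_eq_zero] using hne
  have hlog := (hnsq.log hN).div_const 2
  have : (g' / g s).re =
      (g'.re * (g s).re + (g s).re * g'.re + (g'.im * (g s).im + (g s).im * g'.im)) /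
        Complex.normSq (g s) / 2 := by
    rw [Complex.div_re]
    field_simp
    ring
  rw [this]
  simpa only [key] using hlog

lemma schwarz_order_two {f : ℂ → ℂ}
    (hd : DifferentiableOn ℂ f (ball (0:ℂ) 1))
    (hm : Set.MapsTo f (ball (0:ℂ) 1) (ball (0:ℂ) 1))
    (h0 : f 0 = 0) (h1 : deriv f 0 = 0) :
    ∀ z ∈ ball (0:ℂ) 1, ‖f z‖ ≤ ‖z‖ ^ 2 := by
  intro z hz
  rcases eq_or_ne z 0 with rfl | hz0
  · simp [h0]
  set u₁ := dslope f 0 with hu₁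
  set u₂ := dslope u₁ 0 with hu₂
  have hu₁0 : u₁ 0 = 0 := by rw [hu₁, dslope_same, h1]
  -- key bound for each r ∈ (|z|, 1)
  have key : ∀ r ∈ Set.Ioo (‖z‖) 1, ‖f z‖ ≤ ‖z‖ ^ 2 / r ^ 2 := by
    intro r hr
    have hr0 : 0 < r := lt_of_le_of_lt (norm_nonneg z) hr.1
    have hzr : z ∈ ball (0:ℂ) r := by
      simpa [mem_ball, Complex.dist_eq] using hr.1
    have hsub : ball (0:ℂ) r ⊆ ball (0:ℂ) 1 := ball_subset_ball hr.2.le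
    have hd' : DifferentiableOn ℂ f (ball (0:ℂ) r) := hd.mono hsub
    have hm' : Set.MapsTo f (ball (0:ℂ) r) (ball (f 0) 1) := by
      rw [h0]; exact fun w hw => hm (hsub hw)
    -- first dslope bound
    have hb1 : ∀ w ∈ ball (0:ℂ) r, ‖u₁ w‖ ≤ 1 / r := fun w hw =>
      Complex.norm_dslope_le_div_of_mapsTo_ball hd' (hm'.mono_right ball_subset_closedBall) hw
    have hd1 : DifferentiableOn ℂ u₁ (ball (0:ℂ) r) :=
      ((differentiableOn_dslope (ball_mem_nhds _ hr0)).mpr hd')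
    -- second dslope bound, for any R₂ > 1/r
    have hb2 : ∀ R₂, 1 / r < R₂ → ‖u₂ z‖ ≤ R₂ / r := by
      intro R₂ hR₂
      have hm2 : Set.MapsTo u₁ (ball (0:ℂ) r) (ball (u₁ 0) R₂) := by
        intro w hw
        rw [hu₁0, mem_ball, dist_zero_right]
        exact lt_of_le_of_lt (hb1 w hw) hR₂
      exact Complex.norm_dslope_le_div_of_mapsTo_ball hd1 (hm2.mono_right ball_subset_closedBall) hzr
    have hb2' : ‖u₂ z‖ ≤ (1 / r) / r := by
      rw [div_div]
      refine le_of_forall_gt_imp_ge_of_dense ?_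
      intro ε hε
      have h1r : 1 / r < ε * r := by
        calc 1 / r = 1 / (r * r) * r := by field_simp
        _ < ε * r := mul_lt_mul_of_pos_right hε hr0
      have := hb2 (ε * r) h1r
      rwa [mul_div_assoc, div_self hr0.ne', mul_one] at this
    -- unpack: f z = z • u₁ z = z • (z • u₂ z)
    have e1 : z • u₁ z = f z := by
      simpa [h0] using sub_smul_dslope f 0 z
    have e2 : z • u₂ z = u₁ z := by
      simpa [hu₁0] using sub_smul_dslope u₁ 0 z
    have : ‖f z‖ = ‖z‖ ^ 2 * ‖u₂ z‖ := by
      rw [← e1, ← e2]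
      simp only [smul_eq_mul, norm_mul, sq]
      ring
    rw [this]
    calc ‖z‖ ^ 2 * ‖u₂ z‖ ≤ ‖z‖ ^ 2 * ((1/r)/r) := by
          exact mul_le_mul_of_nonneg_left hb2' (by positivity)
    _ = ‖z‖ ^ 2 / r ^ 2 := by rw [div_div, mul_one_div, sq, sq]
  -- let r → 1
  have hlim : Filter.Tendsto (fun r : ℝ => ‖z‖ ^ 2 / r ^ 2)
      (nhdsWithin 1 (Set.Iio 1)) (nhds (‖z‖ ^ 2)) := by
    have : Filter.Tendsto (fun r : ℝ => ‖z‖ ^ 2 / r ^ 2) (nhds 1)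
        (nhds (‖z‖ ^ 2 / 1 ^ 2)) := by
      apply Filter.Tendsto.div tendsto_const_nhds ((continuous_pow 2).tendsto 1) (by norm_num)
    simpa using this.mono_left nhdsWithin_le_nhds
  refine ge_of_tendsto hlim ?_
  filter_upwards [Ioo_mem_nhdsLT_of_mem ⟨by simpa [mem_ball, Complex.dist_eq] using hz, le_rfl⟩]
    with r hr using key r hr

set_option maxHeartbeats 2000000 in
theorem odd_starlike_growth (G : ℂ → ℂ)
    (hG : AnalyticOnNhd ℂ G (ball (0:ℂ) 1))
    (hG0 : G 0 = 0) (hG1 : deriv G 0 = 1)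
    (hodd : ∀ z ∈ ball (0:ℂ) 1, G (-z) = -G z)
    (hstar : ∀ z ∈ ball (0:ℂ) 1, z ≠ 0 → 0 < (z * deriv G z / G z).re) :
    ∀ z ∈ ball (0:ℂ) 1,
      ‖z‖ / (1 + ‖z‖ ^ 2) ≤ ‖G z‖ ∧
      ‖G z‖ ≤ ‖z‖ / (1 - ‖z‖ ^ 2) := by
  have hB : IsOpen (ball (0:ℂ) 1) := isOpen_ball
  have hGd : DifferentiableOn ℂ G (ball (0:ℂ) 1) := fun z hz => (hG z hz).differentiableWithinAt
  have hmem : ∀ {z : ℂ}, z ∈ ball (0:ℂ) 1 → ball (0:ℂ) 1 ∈ nhds z :=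
    fun {z} hz => hB.mem_nhds hz
  have hneg : ∀ {z : ℂ}, z ∈ ball (0:ℂ) 1 → -z ∈ ball (0:ℂ) 1 := by
    intro z hz; simpa [mem_ball, Complex.dist_eq] using hz
  -- G doesn't vanish away from 0
  have hGne : ∀ z ∈ ball (0:ℂ) 1, z ≠ 0 → G z ≠ 0 := by
    intro z hz hz0 hGz
    have := hstar z hz hz0
    rw [hGz, div_zero] at this
    simp at this
  -- H = dslope G 0
  set H : ℂ → ℂ := dslope G 0 with hH
  have hH0 : H 0 = 1 := by rw [hH, dslope_same, hG1]
  have hHz : ∀ z : ℂ, z ≠ 0 → H z = G z / z := by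
    intro z hz0
    rw [hH, dslope_of_ne _ hz0, slope_def_field]
    simp [hG0]
  have hHd : DifferentiableOn ℂ H (ball (0:ℂ) 1) :=
    (differentiableOn_dslope (ball_mem_nhds _ one_pos)).mpr hGd
  have hHne : ∀ z ∈ ball (0:ℂ) 1, H z ≠ 0 := by
    intro z hz
    rcases eq_or_ne z 0 with rfl | hz0
    · rw [hH0]; exact one_ne_zero
    · rw [hHz z hz0]
      exact div_ne_zero (hGne z hz hz0) hz0
  have hGzH : ∀ z : ℂ, G z = z * H z := by
    intro z
    have := sub_smul_dslope G 0 z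
    simpa [hG0, smul_eq_mul] using this.symm
  -- deriv G differentiable
  have hG'd : DifferentiableOn ℂ (deriv G) (ball (0:ℂ) 1) :=
    fun z hz => ((hG.deriv z hz)).differentiableWithinAt
  -- P
  set P : ℂ → ℂ := fun z => deriv G z / H z with hPdef
  have hPd : DifferentiableOn ℂ P (ball (0:ℂ) 1) := hG'd.div hHd hHne
  have hP0 : P 0 = 1 := by rw [hPdef]; simp [hH0, hG1]
  have hPz : ∀ z ∈ ball (0:ℂ) 1, z ≠ 0 → P z = z * deriv G z / G z := by
    intro z hz hz0
    rw [hPdef]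
    simp only
    rw [hHz z hz0, div_div_eq_mul_div, mul_comm]
  have hPre : ∀ z ∈ ball (0:ℂ) 1, 0 < (P z).re := by
    intro z hz
    rcases eq_or_ne z 0 with rfl | hz0
    · rw [hP0]; norm_num
    · rw [hPz z hz hz0]; exact hstar z hz hz0
  -- evenness of deriv G
  have hG'even : ∀ z ∈ ball (0:ℂ) 1, deriv G (-z) = deriv G z := by
    intro z hz
    have hdz : DifferentiableAt ℂ G z := (hGd.differentiableAt (hmem hz))
    have hdnz : DifferentiableAt ℂ G (-z) := (hGd.differentiableAt (hmem (hneg hz)))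
    have h1 : HasDerivAt (fun w => G (-w)) (deriv G (-z) * (-1)) z :=
      HasDerivAt.comp z (by simpa using hdnz.hasDerivAt) (hasDerivAt_neg z)
    have heq : (fun w => -G w) =ᶠ[nhds z] (fun w => G (-w)) := by
      filter_upwards [hmem hz] with w hw using (hodd w hw).symm
    have h1' : HasDerivAt (fun w => -G w) (deriv G (-z) * (-1)) z :=
      h1.congr_of_eventuallyEq heq
    have h2 : HasDerivAt (fun w => -G w) (-(deriv G z)) z := hdz.hasDerivAt.neg
    have := h1'.unique h2
    linear_combination -this
  have hPeven : ∀ z ∈ ball (0:ℂ) 1, P (-z) = P z := by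
    intro z hz
    rcases eq_or_ne z 0 with rfl | hz0
    · rw [neg_zero]
    · rw [hPz (-z) (hneg hz) (neg_ne_zero.mpr hz0), hPz z hz hz0,
        hG'even z hz, hodd z hz]
      rw [neg_mul, neg_div_neg_eq]
  -- W
  have hPadd : ∀ z ∈ ball (0:ℂ) 1, P z + 1 ≠ 0 := by
    intro z hz h
    have h2 : (P z + 1).re = 0 := by rw [h]; simp
    rw [Complex.add_re, Complex.one_re] at h2
    have := hPre z hz
    linarith
  set W : ℂ → ℂ := fun z => (P z - 1) / (P z + 1) with hWdef
  have hW0 : W 0 = 0 := by rw [hWdef]; simp [hP0]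
  have hWd : DifferentiableOn ℂ W (ball (0:ℂ) 1) :=
    (hPd.sub_const 1).div (hPd.add_const 1) hPadd
  have hWlt : ∀ z ∈ ball (0:ℂ) 1, ‖W z‖ < 1 := by
    intro z hz
    have hre := hPre z hz
    have hpos : 0 < ‖P z + 1‖ := norm_pos_iff.mpr (hPadd z hz)
    rw [hWdef]
    simp only
    rw [norm_div, div_lt_one hpos]
    refine lt_of_pow_lt_pow_left₀ 2 (norm_nonneg _) ?_
    rw [Complex.sq_norm, Complex.sq_norm, Complex.normSq_apply, Complex.normSq_apply]
    simp only [Complex.sub_re, Complex.sub_im, Complex.add_re, Complex.add_im,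
      Complex.one_re, Complex.one_im]
    nlinarith [hre]
  have hWeven : ∀ z ∈ ball (0:ℂ) 1, W (-z) = W z := by
    intro z hz
    rw [hWdef]
    simp only [hPeven z hz]
  have hW'0 : deriv W 0 = 0 := by
    have h0B : (0:ℂ) ∈ ball (0:ℂ) 1 := mem_ball_self one_pos
    have hd0 : DifferentiableAt ℂ W 0 := hWd.differentiableAt (hmem h0B)
    have hd0' : HasDerivAt W (deriv W 0) (-0:ℂ) := by
      rw [neg_zero]; exact hd0.hasDerivAt
    have h1 : HasDerivAt (fun w => W (-w)) (deriv W 0 * (-1)) 0 :=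
      HasDerivAt.comp (0:ℂ) hd0' (hasDerivAt_neg (0:ℂ))
    have heq : W =ᶠ[nhds (0:ℂ)] (fun w => W (-w)) := by
      filter_upwards [hmem h0B] with w hw using (hWeven w hw).symm
    have h1' : HasDerivAt W (deriv W 0 * (-1)) 0 := h1.congr_of_eventuallyEq heq
    have := h1'.unique hd0.hasDerivAt
    linear_combination (-1/2 : ℂ) * this
  -- Schwarz order 2
  have hWbd : ∀ z ∈ ball (0:ℂ) 1, ‖W z‖ ≤ ‖z‖ ^ 2 := by
    refine schwarz_order_two hWd ?_ hW0 hW'0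
    intro z hz
    simpa [mem_ball, Complex.dist_eq] using hWlt z hz
  -- Re P bounds
  have hPbound : ∀ z ∈ ball (0:ℂ) 1,
      (1 - ‖z‖ ^ 2) / (1 + ‖z‖ ^ 2) ≤ (P z).re ∧
      (P z).re ≤ (1 + ‖z‖ ^ 2) / (1 - ‖z‖ ^ 2) := by
    intro z hz
    set s : ℝ := ‖z‖ ^ 2 with hsdef
    have hs0 : 0 ≤ s := by positivity
    have hs1 : s < 1 := by
      rw [hsdef]
      have : ‖z‖ < 1 := by simpa [mem_ball, Complex.dist_eq] using hz
      nlinarith [norm_nonneg z]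
    set w : ℂ := W z with hwdef
    set a : ℝ := w.re with hadef
    set b : ℝ := w.im with hbdef
    have habsw : ‖w‖ < 1 := by rw [hwdef]; exact hWlt z hz
    have h1w : (1:ℂ) - w ≠ 0 := by
      intro h
      have hw1 : w = 1 := by linear_combination -h
      rw [hw1] at habsw
      simp at habsw
    have hwP : w * (P z + 1) = P z - 1 := by
      rw [hwdef, hWdef]
      simp only
      exact div_mul_cancel₀ _ (hPadd z hz)
    have hPw : P z = (1 + w) / (1 - w) := by
      rw [eq_div_iff h1w]
      linear_combination -hwP
    have habs : a ^ 2 + b ^ 2 ≤ s ^ 2 := by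
      have h1 : ‖w‖ ≤ s := hWbd z hz
      have h2 : ‖w‖ ^ 2 ≤ s ^ 2 := by nlinarith [norm_nonneg w]
      rw [Complex.sq_norm, Complex.normSq_apply] at h2
      nlinarith [h2]
    have ha1 : -s ≤ a := by nlinarith [sq_nonneg b, sq_nonneg (a + s), sq_nonneg (a - s)]
    have ha2 : a ≤ s := by nlinarith [sq_nonneg b, sq_nonneg (a + s), sq_nonneg (a - s)]
    have hN : 0 < (1 - a) ^ 2 + b ^ 2 := by
      have := Complex.normSq_pos.mpr h1w
      have hns : Complex.normSq (1 - w) = (1 - a) ^ 2 + b ^ 2 := by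
        rw [Complex.normSq_apply]
        simp only [Complex.sub_re, Complex.sub_im, Complex.one_re, Complex.one_im]
        ring
      rwa [hns] at this
    have hRe : (P z).re = (1 - a ^ 2 - b ^ 2) / ((1 - a) ^ 2 + b ^ 2) := by
      rw [hPw, Complex.div_re, Complex.normSq_apply]
      simp only [Complex.add_re, Complex.add_im, Complex.sub_re, Complex.sub_im,
        Complex.one_re, Complex.one_im]
      rw [← add_div]
      congr 1 <;> ring
    constructor
    · rw [hRe, div_le_div_iff₀ (by linarith) hN]
      nlinarith [habs, ha1, ha2, sq_nonneg b]
    · rw [hRe, div_le_div_iff₀ hN (by linarith)]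
      nlinarith [habs, ha1, ha2, sq_nonneg b]
  -- main radial argument
  intro z hz
  rcases eq_or_ne z 0 with rfl | hz0
  · simp [hG0]
  set r : ℝ := ‖z‖ with hrdef
  have hr0 : 0 < r := norm_pos_iff.mpr hz0
  have hr1 : r < 1 := by rw [hrdef]; simpa [mem_ball, Complex.dist_eq] using hz
  set ζ : ℂ := z / (r:ℂ) with hζdef
  have hζabs : ‖ζ‖ = 1 := by
    rw [hζdef, norm_div, Complex.norm_real, Real.norm_eq_abs, abs_of_pos hr0, ← hrdef, div_self hr0.ne']
  have hrζ : (r:ℂ) * ζ = z := by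
    rw [hζdef]
    have : (r:ℂ) ≠ 0 := Complex.ofReal_ne_zero.mpr hr0.ne'
    field_simp
  have habs_tζ : ∀ t : ℝ, 0 ≤ t → ‖(t:ℂ) * ζ‖ = t := by
    intro t ht
    rw [norm_mul, hζabs, Complex.norm_real, Real.norm_eq_abs, _root_.abs_of_nonneg ht, mul_one]
  have htζB : ∀ t : ℝ, t ∈ Set.Icc (0:ℝ) r → (t:ℂ) * ζ ∈ ball (0:ℂ) 1 := by
    intro t ht
    rw [mem_ball, dist_zero_right, habs_tζ t ht.1]
    linarith [ht.2]
  -- continuity of the common part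
  have hcont : ContinuousOn (fun t : ℝ => Real.log (‖H ((t:ℂ) * ζ)‖))
      (Set.Icc (0:ℝ) r) := by
    apply ContinuousOn.log
    · apply continuous_norm.comp_continuousOn
      exact (hHd.continuousOn).comp
        ((Complex.continuous_ofReal.mul continuous_const).continuousOn) htζB
    · intro t ht
      simpa using hHne _ (htζB t ht)
  -- derivative of the common part
  have hkey : ∀ t ∈ Set.Ioo (0:ℝ) r,
      HasDerivAt (fun u : ℝ => Real.log (‖H ((u:ℂ) * ζ)‖))
        ((P ((t:ℂ) * ζ)).re / t - 1 / t) t := by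
    intro t ht
    set x : ℂ := (t:ℂ) * ζ with hxdef
    have hxB : x ∈ ball (0:ℂ) 1 := htζB t ⟨ht.1.le, ht.2.le⟩
    have hx0 : x ≠ 0 := by
      intro h
      have := habs_tζ t ht.1.le
      rw [← hxdef, h] at this
      simp at this
      exact ht.1.ne' this.symm
    have hGx : HasDerivAt G (deriv G x) x := (hGd.differentiableAt (hmem hxB)).hasDerivAt
    have hlin : HasDerivAt (fun w : ℂ => w * ζ) ζ (t:ℂ) := by
      simpa using (hasDerivAt_id (t:ℂ)).mul_const ζ
    have hcomp : HasDerivAt (fun w : ℂ => G (w * ζ)) (deriv G x * ζ) (t:ℂ) :=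
      HasDerivAt.comp _ hGx hlin
    have hg : HasDerivAt (fun u : ℝ => G ((u:ℂ) * ζ)) (deriv G x * ζ) t :=
      hcomp.comp_ofReal
    have hlogG : HasDerivAt (fun u : ℝ => Real.log (‖G ((u:ℂ) * ζ)‖))
        ((deriv G x * ζ / G x).re) t := hasDerivAt_log_abs hg (hGne x hxB hx0)
    have hlogt : HasDerivAt Real.log t⁻¹ t := Real.hasDerivAt_log ht.1.ne'
    have hsub := hlogG.sub hlogt
    have hev : (fun u : ℝ => Real.log (‖H ((u:ℂ) * ζ)‖)) =ᶠ[nhds t]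
        (fun u : ℝ => Real.log (‖G ((u:ℂ) * ζ)‖) - Real.log u) := by
      filter_upwards [isOpen_Ioo.mem_nhds ht] with u hu
      have hu0 : (0:ℝ) < u := hu.1
      have huB : (u:ℂ) * ζ ∈ ball (0:ℂ) 1 := htζB u ⟨hu0.le, hu.2.le⟩
      have hux : (u:ℂ) * ζ ≠ 0 := by
        intro h
        have := habs_tζ u hu0.le
        rw [h] at this
        simp at this
        exact hu0.ne' this.symm
      rw [hHz _ hux, norm_div, habs_tζ u hu0.le,
        Real.log_div (by simpa using hGne _ huB hux) hu0.ne']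
    have hfin := hsub.congr_of_eventuallyEq hev
    have hPx : (P x).re = t * ((deriv G x * ζ / G x).re) := by
      rw [hPz x hxB hx0]
      have hxe : x * deriv G x / G x = (t:ℂ) * (deriv G x * ζ / G x) := by
        rw [hxdef]; ring
      rw [hxe, Complex.re_ofReal_mul]
    have heq : (P x).re / t - 1 / t = (deriv G x * ζ / G x).re - t⁻¹ := by
      rw [hPx, mul_div_cancel_left₀ _ ht.1.ne', one_div]
    rw [heq]
    exact hfin
  -- the two comparison functions
  have h1r2 : 0 < 1 - r ^ 2 := by nlinarith
  have habsz2 : ∀ t ∈ Set.Ioo (0:ℝ) r, ‖(t:ℂ) * ζ‖ ^ 2 = t ^ 2 := by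
    intro t ht
    rw [habs_tζ t ht.1.le]
  -- upper bound
  have hup : ‖H z‖ * (1 - r ^ 2) ≤ 1 := by
    set Fup : ℝ → ℝ :=
      fun t => Real.log (‖H ((t:ℂ) * ζ)‖) + Real.log (1 - t ^ 2) with hFup
    have hanti : AntitoneOn Fup (Set.Icc 0 r) := by
      apply antitoneOn_of_deriv_nonpos (convex_Icc 0 r)
      · apply hcont.add
        apply ContinuousOn.log
        · exact (continuous_const.sub (continuous_pow 2)).continuousOn
        · intro t ht
          have := ht.2
          have := ht.1
          nlinarith
      · rw [interior_Icc]
        intro t ht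
        have hden : (1:ℝ) - t ^ 2 ≠ 0 := by nlinarith [ht.1, ht.2]
        have hq : HasDerivAt (fun u : ℝ => Real.log (1 - u ^ 2))
            (-(2 * t ^ 1) / (1 - t ^ 2)) t :=
          HasDerivAt.log ((hasDerivAt_pow 2 t).const_sub 1) hden
        exact (((hkey t ht).add hq).differentiableAt).differentiableWithinAt
      · rw [interior_Icc]
        intro t ht
        have hden : (0:ℝ) < 1 - t ^ 2 := by nlinarith [ht.1, ht.2]
        have hq : HasDerivAt (fun u : ℝ => Real.log (1 - u ^ 2))
            (-(2 * t ^ 1) / (1 - t ^ 2)) t :=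
          HasDerivAt.log ((hasDerivAt_pow 2 t).const_sub 1) hden.ne'
        have htot := (hkey t ht).add hq
        rw [(show HasDerivAt Fup _ t from htot).deriv]
        have hxB : (t:ℂ) * ζ ∈ ball (0:ℂ) 1 := htζB t ⟨ht.1.le, ht.2.le⟩
        have hPB := (hPbound _ hxB).2
        rw [habsz2 t ht] at hPB
        set A : ℝ := (P ((t:ℂ) * ζ)).re with hAdef
        have hAle : A / t ≤ (1 + t ^ 2) / (t * (1 - t ^ 2)) := by
          rw [div_le_div_iff₀ ht.1 (mul_pos ht.1 hden)]
          calc A * (t * (1 - t ^ 2)) = (A * (1 - t ^ 2)) * t := by ring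
          _ ≤ ((1 + t ^ 2) / (1 - t ^ 2) * (1 - t ^ 2)) * t := by
              apply mul_le_mul_of_nonneg_right _ ht.1.le
              exact mul_le_mul_of_nonneg_right hPB hden.le
          _ = (1 + t ^ 2) * t := by rw [div_mul_cancel₀ _ hden.ne']
        have hcomb : 1 / t + 2 * t / (1 - t ^ 2) = (1 + t ^ 2) / (t * (1 - t ^ 2)) := by
          rw [div_add_div _ _ ht.1.ne' hden.ne']
          congr 1
          ring
        have : -(2 * t ^ 1) / (1 - t ^ 2) = -(2 * t / (1 - t ^ 2)) := by
          rw [pow_one, neg_div]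
        rw [this]
        linarith
    have hr_mem : r ∈ Set.Icc (0:ℝ) r := ⟨hr0.le, le_rfl⟩
    have h0_mem : (0:ℝ) ∈ Set.Icc (0:ℝ) r := ⟨le_rfl, hr0.le⟩
    have h0v : Fup 0 = 0 := by
      rw [hFup]
      norm_num [hH0]
    have hrv : Fup r = Real.log (‖H z‖) + Real.log (1 - r ^ 2) := by
      rw [hFup]
      simp only [hrζ]
    have hle := hanti h0_mem hr_mem hr0.le
    rw [h0v, hrv] at hle
    have hHpos : 0 < ‖H z‖ := norm_pos_iff.mpr (hHne z hz)
    rw [← Real.log_mul hHpos.ne' h1r2.ne'] at hle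
    exact (Real.log_nonpos_iff (by positivity)).mp hle
  -- lower bound
  have hlo : 1 ≤ ‖H z‖ * (1 + r ^ 2) := by
    set Flo : ℝ → ℝ :=
      fun t => Real.log (‖H ((t:ℂ) * ζ)‖) + Real.log (1 + t ^ 2) with hFlo
    have hmono : MonotoneOn Flo (Set.Icc 0 r) := by
      apply monotoneOn_of_deriv_nonneg (convex_Icc 0 r)
      · apply hcont.add
        apply ContinuousOn.log
        · exact (continuous_const.add (continuous_pow 2)).continuousOn
        · intro t ht
          nlinarith [sq_nonneg t]
      · rw [interior_Icc]
        intro t ht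
        have hden : (1:ℝ) + t ^ 2 ≠ 0 := by positivity
        have hq : HasDerivAt (fun u : ℝ => Real.log (1 + u ^ 2))
            ((2 * t ^ 1) / (1 + t ^ 2)) t :=
          HasDerivAt.log ((hasDerivAt_pow 2 t).const_add 1) hden
        exact (((hkey t ht).add hq).differentiableAt).differentiableWithinAt
      · rw [interior_Icc]
        intro t ht
        have hden : (0:ℝ) < 1 + t ^ 2 := by positivity
        have hq : HasDerivAt (fun u : ℝ => Real.log (1 + u ^ 2))
            ((2 * t ^ 1) / (1 + t ^ 2)) t :=
          HasDerivAt.log ((hasDerivAt_pow 2 t).const_add 1) hden.ne'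
        have htot := (hkey t ht).add hq
        rw [(show HasDerivAt Flo _ t from htot).deriv]
        have hxB : (t:ℂ) * ζ ∈ ball (0:ℂ) 1 := htζB t ⟨ht.1.le, ht.2.le⟩
        have hPB := (hPbound _ hxB).1
        rw [habsz2 t ht] at hPB
        set A : ℝ := (P ((t:ℂ) * ζ)).re with hAdef
        have hAge : (1 - t ^ 2) / (t * (1 + t ^ 2)) ≤ A / t := by
          rw [div_le_div_iff₀ (mul_pos ht.1 hden) ht.1]
          calc (1 - t ^ 2) * t = ((1 - t ^ 2) / (1 + t ^ 2) * (1 + t ^ 2)) * t := by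
                rw [div_mul_cancel₀ _ hden.ne']
          _ ≤ (A * (1 + t ^ 2)) * t := by
              apply mul_le_mul_of_nonneg_right _ ht.1.le
              exact mul_le_mul_of_nonneg_right hPB hden.le
          _ = A * (t * (1 + t ^ 2)) := by ring
        have hcomb : 1 / t - 2 * t / (1 + t ^ 2) = (1 - t ^ 2) / (t * (1 + t ^ 2)) := by
          rw [div_sub_div _ _ ht.1.ne' hden.ne']
          congr 1
          ring
        have hpow : (2 * t ^ 1) / (1 + t ^ 2) = 2 * t / (1 + t ^ 2) := by rw [pow_one]
        rw [hpow]
        linarith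
    have hr_mem : r ∈ Set.Icc (0:ℝ) r := ⟨hr0.le, le_rfl⟩
    have h0_mem : (0:ℝ) ∈ Set.Icc (0:ℝ) r := ⟨le_rfl, hr0.le⟩
    have h0v : Flo 0 = 0 := by
      rw [hFlo]
      norm_num [hH0]
    have hrv : Flo r = Real.log (‖H z‖) + Real.log (1 + r ^ 2) := by
      rw [hFlo]
      simp only [hrζ]
    have hle := hmono h0_mem hr_mem hr0.le
    rw [h0v, hrv] at hle
    have hHpos : 0 < ‖H z‖ := norm_pos_iff.mpr (hHne z hz)
    rw [← Real.log_mul hHpos.ne' (by positivity : (1:ℝ) + r ^ 2 ≠ 0)] at hle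
    exact (Real.log_nonneg_iff (by positivity)).mp hle
  -- conclude
  have hGabs : ‖G z‖ = r * ‖H z‖ := by
    rw [hGzH z, norm_mul, ← hrdef]
  constructor
  · rw [hGabs, div_le_iff₀ (by positivity : (0:ℝ) < 1 + r ^ 2)]
    calc r = r * 1 := (mul_one r).symm
    _ ≤ r * (‖H z‖ * (1 + r ^ 2)) := by
        exact mul_le_mul_of_nonneg_left hlo hr0.le
    _ = r * ‖H z‖ * (1 + r ^ 2) := by ring
  · rw [hGabs, le_div_iff₀ h1r2]
    calc r * ‖H z‖ * (1 - r ^ 2)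
        = r * (‖H z‖ * (1 - r ^ 2)) := by ring
    _ ≤ r * 1 := mul_le_mul_of_nonneg_left hup hr0.le
    _ = r := mul_one r
end

section
/- Let φ(z) = 1 + B₁z + B₂z² + ⋯ with B₁ > 0 be analytic on the unit disk, and let f(z) = z + a₂z² + a₃z³ + ⋯ be analytic on 𝔻. Suppose there exists g starlike of order 1/2 such that -z²f'(z)/(g(z)g(-z)) = φ(w(z)) for some analytic w with w(0)=0, |w(z)|<1. Then for every μ ∈ ℂ, |a₃ - μa₂²| ≤ 1/3 + max(B₁/3, |B₂/3 - μB₁²/4|). -/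
open Complex Metric Filter Set Topology

noncomputable def TD (F : ℂ → ℂ) : ℂ → ℂ := dslope F 0
noncomputable def tc (n : ℕ) (F : ℂ → ℂ) : ℂ := (TD^[n] F) 0

lemma tc_zero (F : ℂ → ℂ) : tc 0 F = F 0 := rfl

lemma tc_succ (n : ℕ) (F : ℂ → ℂ) : tc (n+1) F = tc n (TD F) := by
  simp [tc, Function.iterate_succ_apply]

lemma tc_one (F : ℂ → ℂ) : tc 1 F = deriv F 0 := by
  simp [tc, TD, dslope_same]

lemma analyticAt_TD {F : ℂ → ℂ} (h : AnalyticAt ℂ F 0) : AnalyticAt ℂ (TD F) 0 := by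
  obtain ⟨p, hp⟩ := h
  exact ⟨p.fslope, hp.has_fpower_series_dslope_fslope⟩

lemma iteratedDeriv_eq_tc {F : ℂ → ℂ} (h : AnalyticAt ℂ F 0) (n : ℕ) :
    iteratedDeriv n F 0 = (n.factorial : ℂ) * tc n F := by
  obtain ⟨p, hp⟩ := h
  have h1 : tc n F = p.coeff n := by
    have h2 := (hp.has_fpower_series_iterate_dslope_fslope n).coeff_zero (fun _ => 1)
    have h3 : (TD^[n] F) = ((Function.swap dslope 0)^[n] F) := rfl
    rw [tc, h3, ← h2]
    show (FormalMultilinearSeries.fslope^[n] p).coeff 0 = p.coeff n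
    rw [FormalMultilinearSeries.coeff_iterate_fslope, Nat.zero_add]
  obtain ⟨r, hr⟩ := hp
  have h4 := hr.factorial_smul (1 : ℂ) n
  rw [iteratedDeriv, ← h4, h1]
  have h5 : p n (fun _ => (1:ℂ)) = p.coeff n := rfl
  rw [h5, nsmul_eq_mul]

lemma TD_congr {F G : ℂ → ℂ} (h : F =ᶠ[𝓝 (0:ℂ)] G) : TD F =ᶠ[𝓝 (0:ℂ)] TD G := by
  have h0 : F 0 = G 0 := h.self_of_nhds
  have hd : deriv F 0 = deriv G 0 := h.deriv_eq
  filter_upwards [h] with z hz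
  rcases eq_or_ne z 0 with rfl | hne
  · simpa [TD, dslope_same] using hd
  · simp [TD, dslope_of_ne _ hne, slope, hz, h0]

lemma tc_congr {F G : ℂ → ℂ} (h : F =ᶠ[𝓝 (0:ℂ)] G) (n : ℕ) : tc n F = tc n G := by
  induction n generalizing F G with
  | zero => exact h.self_of_nhds
  | succ n ih => rw [tc_succ, tc_succ]; exact ih (TD_congr h)

lemma eventuallyEq_of_punctured {F G : ℂ → ℂ} (h : F =ᶠ[𝓝[≠] (0:ℂ)] G)
    (hF : ContinuousAt F 0) (hG : ContinuousAt G 0) : F =ᶠ[𝓝 (0:ℂ)] G := by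
  have h0 : F 0 = G 0 := by
    haveI : (𝓝[≠] (0:ℂ)).NeBot := NormedField.nhdsNE_neBot (0:ℂ)
    exact tendsto_nhds_unique (hF.tendsto.mono_left nhdsWithin_le_nhds)
      ((hG.tendsto.mono_left nhdsWithin_le_nhds).congr' h.symm)
  rw [← nhdsNE_sup_pure (0:ℂ)]
  have : (∀ᶠ z in 𝓝[≠] (0:ℂ) ⊔ pure 0, F z = G z) := by
    rw [eventually_sup]
    exact ⟨h, eventually_pure.2 h0⟩
  exact this

lemma TD_mul (F G : ℂ → ℂ) {z : ℂ} (hz : z ≠ 0) :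
    TD (fun y => F y * G y) z = F z * TD G z + G 0 * TD F z := by
  simp only [TD, dslope_of_ne _ hz, slope, vsub_eq_sub]
  field_simp
  ring

lemma TD_comp {Φ V : ℂ → ℂ} (hV0 : V 0 = 0) {z : ℂ} (hz : z ≠ 0) :
    TD (fun y => Φ (V y)) z = TD Φ (V z) * TD V z := by
  rcases eq_or_ne (V z) 0 with hVz | hVz
  · simp [TD, dslope_of_ne _ hz, slope, hVz, hV0]
  · simp only [TD, dslope_of_ne _ hz, dslope_of_ne _ hVz, slope, hV0, vsub_eq_sub, smul_eq_mul, sub_zero]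
    field_simp
lemma TD_zero (F : ℂ → ℂ) : TD F 0 = deriv F 0 := dslope_same F 0

lemma tc_two (F : ℂ → ℂ) : tc 2 F = deriv (TD F) 0 := by
  rw [show (2:ℕ) = 1 + 1 from rfl, tc_succ, tc_one]

lemma tc1_TD (F : ℂ → ℂ) : tc 1 (TD F) = tc 2 F := by
  rw [tc_two, tc_one]

lemma TD_mul_eventuallyEq {F G : ℂ → ℂ} (hF : AnalyticAt ℂ F 0) (hG : AnalyticAt ℂ G 0) :
    TD (fun y => F y * G y) =ᶠ[𝓝 (0:ℂ)] fun z => F z * TD G z + G 0 * TD F z := by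
  apply eventuallyEq_of_punctured
  · filter_upwards [self_mem_nhdsWithin] with z hz
    exact TD_mul F G hz
  · exact (analyticAt_TD (hF.mul hG)).continuousAt
  · exact (hF.continuousAt.mul (analyticAt_TD hG).continuousAt).add
      (continuousAt_const.mul (analyticAt_TD hF).continuousAt)

lemma tc1_mul {F G : ℂ → ℂ} (hF : AnalyticAt ℂ F 0) (hG : AnalyticAt ℂ G 0) :
    tc 1 (fun y => F y * G y) = F 0 * tc 1 G + tc 1 F * G 0 := by
  rw [tc_one, tc_one, tc_one, deriv_fun_mul hF.differentiableAt hG.differentiableAt]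
  ring

lemma tc2_mul {F G : ℂ → ℂ} (hF : AnalyticAt ℂ F 0) (hG : AnalyticAt ℂ G 0) :
    tc 2 (fun y => F y * G y) = F 0 * tc 2 G + tc 1 F * tc 1 G + tc 2 F * G 0 := by
  have h1 : tc 2 (fun y => F y * G y) = tc 1 (fun z => F z * TD G z + G 0 * TD F z) := by
    rw [show (2:ℕ) = 1 + 1 from rfl, tc_succ]
    exact tc_congr (TD_mul_eventuallyEq hF hG) 1
  rw [h1, tc_one]
  have dFG : DifferentiableAt ℂ (fun z => F z * TD G z) 0 :=
    (hF.mul (analyticAt_TD hG)).differentiableAt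
  have dF2 : DifferentiableAt ℂ (fun z => G 0 * TD F z) 0 :=
    (analyticAt_const.mul (analyticAt_TD hF)).differentiableAt
  rw [deriv_fun_add dFG dF2, deriv_fun_mul hF.differentiableAt (analyticAt_TD hG).differentiableAt,
    deriv_const_mul_field]
  simp only [TD_zero, ← tc_one, tc1_TD]
  ring

lemma TD_comp_eventuallyEq {Φ V : ℂ → ℂ} (hΦ : AnalyticAt ℂ Φ 0) (hV : AnalyticAt ℂ V 0)
    (hV0 : V 0 = 0) :
    TD (fun y => Φ (V y)) =ᶠ[𝓝 (0:ℂ)] fun z => TD Φ (V z) * TD V z := by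
  apply eventuallyEq_of_punctured
  · filter_upwards [self_mem_nhdsWithin] with z hz
    exact TD_comp hV0 hz
  · have : AnalyticAt ℂ (Φ ∘ V) 0 := by
      apply AnalyticAt.comp _ hV
      rw [hV0]; exact hΦ
    exact (analyticAt_TD this).continuousAt
  · apply ContinuousAt.mul _ (analyticAt_TD hV).continuousAt
    have h1 : ContinuousAt (TD Φ) (V 0) := by rw [hV0]; exact (analyticAt_TD hΦ).continuousAt
    exact h1.comp hV.continuousAt

lemma tc1_comp {Φ V : ℂ → ℂ} (hΦ : AnalyticAt ℂ Φ 0) (hV : AnalyticAt ℂ V 0)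
    (hV0 : V 0 = 0) : tc 1 (fun y => Φ (V y)) = tc 1 Φ * tc 1 V := by
  have h0 := (TD_comp_eventuallyEq hΦ hV hV0).self_of_nhds
  simp only [TD_zero] at h0
  rw [tc_one, tc_one, tc_one, h0, hV0, TD_zero]

lemma tc2_comp {Φ V : ℂ → ℂ} (hΦ : AnalyticAt ℂ Φ 0) (hV : AnalyticAt ℂ V 0)
    (hV0 : V 0 = 0) :
    tc 2 (fun y => Φ (V y)) = tc 2 Φ * (tc 1 V)^2 + tc 1 Φ * tc 2 V := by
  have h1 : tc 2 (fun y => Φ (V y)) = tc 1 (fun z => TD Φ (V z) * TD V z) := by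
    rw [show (2:ℕ) = 1 + 1 from rfl, tc_succ]
    exact tc_congr (TD_comp_eventuallyEq hΦ hV hV0) 1
  have hTDΦV : DifferentiableAt ℂ (TD Φ) (V 0) := by
    rw [hV0]; exact (analyticAt_TD hΦ).differentiableAt
  have hdc : DifferentiableAt ℂ (fun z => TD Φ (V z)) 0 := hTDΦV.comp 0 hV.differentiableAt
  have hcc : deriv (fun z => TD Φ (V z)) 0 = deriv (TD Φ) (V 0) * deriv V 0 :=
    deriv_comp 0 hTDΦV hV.differentiableAt
  rw [h1, tc_one, deriv_fun_mul hdc (analyticAt_TD hV).differentiableAt, hcc]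
  simp only [hV0, TD_zero, ← tc_one, tc1_TD]
  ring

lemma tc1_sub {F G : ℂ → ℂ} (hF : AnalyticAt ℂ F 0) (hG : AnalyticAt ℂ G 0) :
    tc 1 (fun y => F y - G y) = tc 1 F - tc 1 G := by
  rw [tc_one, tc_one, tc_one, deriv_fun_sub hF.differentiableAt hG.differentiableAt]

lemma TD_sub_eventuallyEq {F G : ℂ → ℂ} (hF : AnalyticAt ℂ F 0) (hG : AnalyticAt ℂ G 0) :
    TD (fun y => F y - G y) =ᶠ[𝓝 (0:ℂ)] fun z => TD F z - TD G z := by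
  apply eventuallyEq_of_punctured
  · filter_upwards [self_mem_nhdsWithin] with z hz
    simp only [TD, dslope_of_ne _ hz, slope, vsub_eq_sub]
    field_simp
    ring
  · exact (analyticAt_TD (hF.sub hG)).continuousAt
  · exact ((analyticAt_TD hF).continuousAt).sub ((analyticAt_TD hG).continuousAt)

lemma tc2_sub {F G : ℂ → ℂ} (hF : AnalyticAt ℂ F 0) (hG : AnalyticAt ℂ G 0) :
    tc 2 (fun y => F y - G y) = tc 2 F - tc 2 G := by
  have h1 : tc 2 (fun y => F y - G y) = tc 1 (fun z => TD F z - TD G z) := by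
    rw [show (2:ℕ) = 1 + 1 from rfl, tc_succ]
    exact tc_congr (TD_sub_eventuallyEq hF hG) 1
  rw [h1, tc_one, deriv_fun_sub (analyticAt_TD hF).differentiableAt
    (analyticAt_TD hG).differentiableAt, ← tc_two, ← tc_two]

lemma tc_deriv {F : ℂ → ℂ} (hF : AnalyticAt ℂ F 0) (hdF : AnalyticAt ℂ (deriv F) 0) (n : ℕ) :
    tc n (deriv F) = (n + 1 : ℂ) * tc (n+1) F := by
  have hne : ((n.factorial : ℂ)) ≠ 0 := by exact_mod_cast n.factorial_ne_zero
  have key : (n.factorial : ℂ) * tc n (deriv F) = ((n+1).factorial : ℂ) * tc (n+1) F := by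
    rw [← iteratedDeriv_eq_tc hdF n, ← iteratedDeriv_eq_tc hF (n+1), iteratedDeriv_succ']
  apply mul_left_cancel₀ hne
  rw [key, Nat.factorial_succ]
  push_cast
  ring


lemma normSq_mobius_identity (a ζ : ℂ) :
    normSq (1 - (starRingEnd ℂ) a * ζ) - normSq (ζ - a) = (1 - normSq a) * (1 - normSq ζ) := by
  simp only [normSq_apply, Complex.sub_re, Complex.sub_im, Complex.one_re, Complex.one_im,
    Complex.mul_re, Complex.mul_im, Complex.conj_re, Complex.conj_im]
  ring

lemma mobius_den_ne {a ζ : ℂ} (ha : ‖a‖ < 1) (hζ : ‖ζ‖ ≤ 1) :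
    (1 : ℂ) - (starRingEnd ℂ) a * ζ ≠ 0 := by
  intro h
  have h2 : (starRingEnd ℂ) a * ζ = 1 := by linear_combination -h
  have h3 : ‖(starRingEnd ℂ) a * ζ‖ = 1 := by rw [h2]; simp
  rw [norm_mul, Complex.norm_conj] at h3
  nlinarith [norm_nonneg a, norm_nonneg ζ]

lemma mobius_lt_one {a ζ : ℂ} (ha : ‖a‖ < 1) (hζ : ‖ζ‖ < 1) :
    ‖(ζ - a) / (1 - (starRingEnd ℂ) a * ζ)‖ < 1 := by
  have hden : 0 < ‖1 - (starRingEnd ℂ) a * ζ‖ :=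
    norm_pos_iff.mpr (mobius_den_ne ha hζ.le)
  rw [norm_div, div_lt_one hden]
  have key := normSq_mobius_identity a ζ
  have h2 : 0 < (1 - normSq a) * (1 - normSq ζ) := by
    apply mul_pos
    · have := Complex.sq_norm a; nlinarith [norm_nonneg a]
    · have := Complex.sq_norm ζ; nlinarith [norm_nonneg ζ]
  have h3 : normSq (ζ - a) < normSq (1 - (starRingEnd ℂ) a * ζ) := by linarith
  rw [← Complex.sq_norm, ← Complex.sq_norm] at h3
  exact lt_of_pow_lt_pow_left₀ 2 (norm_nonneg _) h3

lemma deriv_bound_of_norm_le {u : ℂ → ℂ} (hu : DifferentiableOn ℂ u (ball (0:ℂ) 1))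
    (hb : ∀ z ∈ ball (0:ℂ) 1, ‖u z‖ ≤ 1) :
    ‖deriv u 0‖ ≤ 1 - ‖u 0‖ ^ 2 := by
  have h0m : (0:ℂ) ∈ ball (0:ℂ) 1 := mem_ball_self one_pos
  by_cases hmax : ∃ z₀ ∈ ball (0:ℂ) 1, ‖u z₀‖ = 1
  · obtain ⟨z₀, hz₀, hz₁⟩ := hmax
    have hm : IsMaxOn (norm ∘ u) (ball (0:ℂ) 1) z₀ := by
      intro y hy
      simp only [Function.comp_apply, hz₁]
      exact hb y hy
    have hconst := Complex.eqOn_of_isPreconnected_of_isMaxOn_norm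
      (convex_ball (0:ℂ) 1).isPreconnected isOpen_ball hu hz₀ hm
    have hder : deriv u 0 = 0 := by
      have heq : u =ᶠ[𝓝 (0:ℂ)] fun _ => u z₀ := by
        filter_upwards [isOpen_ball.mem_nhds h0m] with y hy
        exact hconst hy
      rw [heq.deriv_eq]
      exact deriv_const 0 _
    have hu0 : ‖u 0‖ = 1 := by
      rw [show u 0 = u z₀ from hconst h0m]; exact hz₁
    rw [hder, hu0]
    simp
  · push_neg at hmax
    have hlt : ∀ z ∈ ball (0:ℂ) 1, ‖u z‖ < 1 :=
      fun z hz => lt_of_le_of_ne (hb z hz) (hmax z hz)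
    set a := u 0 with ha_def
    have ha : ‖a‖ < 1 := hlt 0 h0m
    set m : ℂ → ℂ := fun ζ => (ζ - a) / (1 - (starRingEnd ℂ) a * ζ) with hm_def
    have hdiffm : ∀ ζ : ℂ, ‖ζ‖ < 1 → DifferentiableAt ℂ m ζ := by
      intro ζ hζ
      apply DifferentiableAt.div
      · exact differentiableAt_id.sub (differentiableAt_const a)
      · exact (differentiableAt_const _).sub ((differentiableAt_const _).mul differentiableAt_id)
      · exact mobius_den_ne ha hζ.le
    have hu0d : DifferentiableAt ℂ u 0 := hu.differentiableAt (isOpen_ball.mem_nhds h0m)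
    have hv : DifferentiableOn ℂ (m ∘ u) (ball (0:ℂ) 1) := by
      intro z hz
      exact ((hdiffm (u z) (hlt z hz)).comp z
        (hu.differentiableAt (isOpen_ball.mem_nhds hz))).differentiableWithinAt
    have h00 : (m ∘ u) 0 = 0 := by
      simp only [Function.comp_apply, hm_def, ← ha_def, sub_self, zero_div]
    have hmaps : MapsTo (m ∘ u) (ball (0:ℂ) 1) (ball ((m ∘ u) 0) 1) := by
      rw [h00]
      intro z hz
      rw [mem_ball_zero_iff]
      exact mobius_lt_one ha (hlt z hz)
    have hS : ‖deriv (m ∘ u) 0‖ ≤ 1 / 1 :=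
      Complex.norm_deriv_le_div_of_mapsTo_ball hv (hmaps.mono_right ball_subset_closedBall) one_pos
    rw [div_one] at hS
    have hder : deriv (m ∘ u) 0 = deriv m a * deriv u 0 := deriv_comp 0 (hdiffm a ha) hu0d
    have hden0 : (1 : ℂ) - (starRingEnd ℂ) a * a ≠ 0 := mobius_den_ne ha ha.le
    have hma : deriv m a = (1 - (starRingEnd ℂ) a * a)⁻¹ := by
      have hd1 : HasDerivAt (fun ζ : ℂ => ζ - a) 1 a := (hasDerivAt_id a).sub_const a
      have hd2 : HasDerivAt (fun ζ : ℂ => (1:ℂ) - (starRingEnd ℂ) a * ζ)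
          (-(starRingEnd ℂ) a) a := by
        simpa using ((hasDerivAt_id a).const_mul ((starRingEnd ℂ) a)).const_sub 1
      have := (hd1.div hd2 hden0).deriv
      rw [show m = ((fun ζ : ℂ => ζ - a) / fun ζ => 1 - (starRingEnd ℂ) a * ζ) from rfl, this]
      field_simp
      ring
    have habs : ‖(1:ℂ) - (starRingEnd ℂ) a * a‖ = 1 - ‖a‖ ^ 2 := by
      have h1 : (starRingEnd ℂ) a * a = (normSq a : ℂ) := by
        rw [mul_comm, Complex.mul_conj]
      rw [h1, ← Complex.ofReal_one, ← Complex.ofReal_sub, Complex.norm_real, Real.norm_eq_abs]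
      rw [_root_.abs_of_nonneg (by nlinarith [Complex.sq_norm a, norm_nonneg a] :
        (0:ℝ) ≤ 1 - normSq a), ← Complex.sq_norm]
    have : ‖deriv u 0‖ = ‖deriv (m ∘ u) 0‖ *
        ‖(1:ℂ) - (starRingEnd ℂ) a * a‖ := by
      rw [hder, hma, norm_mul, norm_inv]
      have hane : ‖(1:ℂ) - (starRingEnd ℂ) a * a‖ ≠ 0 :=
        norm_ne_zero_iff.mpr hden0
      field_simp
    rw [this, habs]
    calc ‖deriv (m ∘ u) 0‖ * (1 - ‖a‖ ^ 2)
        ≤ 1 * (1 - ‖a‖ ^ 2) := by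
          apply mul_le_mul_of_nonneg_right _ (by nlinarith [norm_nonneg a])
          exact hS
      _ = 1 - ‖u 0‖ ^ 2 := by rw [one_mul, ha_def]

lemma schwarz_tc {v : ℂ → ℂ} (hv : DifferentiableOn ℂ v (ball (0:ℂ) 1)) (hv0 : v 0 = 0)
    (hvb : ∀ z ∈ ball (0:ℂ) 1, ‖v z‖ < 1) :
    ‖tc 1 v‖ ≤ 1 ∧ ‖tc 2 v‖ ≤ 1 - ‖tc 1 v‖ ^ 2 := by
  have h0m : (0:ℂ) ∈ ball (0:ℂ) 1 := mem_ball_self one_pos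
  have hmaps : MapsTo v (ball (0:ℂ) 1) (ball (v 0) 1) := by
    rw [hv0]
    intro z hz
    rw [mem_ball_zero_iff]
    exact hvb z hz
  have hub : ∀ z ∈ ball (0:ℂ) 1, ‖TD v z‖ ≤ 1 := by
    intro z hz
    have := Complex.norm_dslope_le_div_of_mapsTo_ball hv (hmaps.mono_right ball_subset_closedBall) hz
    rwa [div_one] at this
  have hud : DifferentiableOn ℂ (TD v) (ball (0:ℂ) 1) :=
    (differentiableOn_dslope (isOpen_ball.mem_nhds h0m)).mpr hv
  have htc1 : tc 1 v = TD v 0 := by rw [tc_one, TD_zero]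
  constructor
  · rw [htc1]; exact hub 0 h0m
  · have h := deriv_bound_of_norm_le hud hub
    rw [tc_two, htc1]
    exact h

lemma TD_neg : TD (fun z : ℂ => -z) = fun _ => -1 := by
  funext z
  rcases eq_or_ne z 0 with rfl | hz
  · rw [TD_zero]
    have : HasDerivAt (fun z : ℂ => -z) (-1) 0 := (hasDerivAt_id 0).neg
    exact this.deriv
  · rw [TD, dslope_of_ne _ hz]
    simp [slope]
    field_simp

lemma tc1_neg : tc 1 (fun z : ℂ => -z) = -1 := by
  rw [tc_one]
  exact ((hasDerivAt_id (0:ℂ)).neg).deriv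

lemma tc2_neg : tc 2 (fun z : ℂ => -z) = 0 := by
  rw [tc_two, TD_neg]
  simp

lemma analyticAt_negfun : AnalyticAt ℂ (fun z : ℂ => -z) 0 := analyticAt_id.neg

lemma re_gt_half_abs_lt_one {p : ℂ} (hp : 1/2 < p.re) :
    ‖(p - 1) / p‖ < 1 := by
  have hp0 : p ≠ 0 := by
    intro h; rw [h] at hp; simp at hp; linarith
  have hpa : 0 < ‖p‖ := norm_pos_iff.mpr hp0
  rw [norm_div, div_lt_one hpa]
  have key : normSq p - normSq (p - 1) = 2 * p.re - 1 := by
    simp only [normSq_apply, Complex.sub_re, Complex.sub_im, Complex.one_re, Complex.one_im]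
    ring
  have h3 : normSq (p - 1) < normSq p := by linarith
  rw [← Complex.sq_norm, ← Complex.sq_norm] at h3
  exact lt_of_pow_lt_pow_left₀ 2 (norm_nonneg _) h3

theorem fekete_szego_Ks (f g w φ : ℂ → ℂ)
    (hf : AnalyticOnNhd ℂ f (ball (0:ℂ) 1)) (hf0 : f 0 = 0) (hf1 : deriv f 0 = 1)
    (hg : AnalyticOnNhd ℂ g (ball (0:ℂ) 1)) (hg0 : g 0 = 0) (hg1 : deriv g 0 = 1)
    (hstar : ∀ z ∈ ball (0:ℂ) 1, z ≠ 0 → 1 / 2 < (z * deriv g z / g z).re)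
    (hw : AnalyticOnNhd ℂ w (ball (0:ℂ) 1)) (hw0 : w 0 = 0)
    (hwb : ∀ z ∈ ball (0:ℂ) 1, ‖w z‖ < 1)
    (hφ : AnalyticOnNhd ℂ φ (ball (0:ℂ) 1)) (hφ0 : φ 0 = 1)
    (B₁ : ℝ) (hB₁ : 0 < B₁) (hB₁' : iteratedDeriv 1 φ 0 = (B₁ : ℂ))
    (B₂ : ℂ) (hB₂ : B₂ = iteratedDeriv 2 φ 0 / 2)
    (a₂ a₃ : ℂ)
    (ha₂ : a₂ = iteratedDeriv 2 f 0 / 2)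
    (ha₃ : a₃ = iteratedDeriv 3 f 0 / 6)
    (hsub : ∀ z ∈ ball (0:ℂ) 1, z ≠ 0 →
      -(z ^ 2 * deriv f z) / (g z * g (-z)) = φ (w z)) :
    ∀ μ : ℂ, ‖a₃ - μ * a₂ ^ 2‖
      ≤ 1 / 3 + max (B₁ / 3) ‖(B₂ : ℂ) / 3 - μ * (B₁ : ℂ) ^ 2 / 4‖ := by
  intro μ
  have h0m : (0:ℂ) ∈ ball (0:ℂ) 1 := mem_ball_self one_pos
  have hfa : AnalyticAt ℂ f 0 := hf 0 h0m
  have hga : AnalyticAt ℂ g 0 := hg 0 h0m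
  have hwa : AnalyticAt ℂ w 0 := hw 0 h0m
  have hφa : AnalyticAt ℂ φ 0 := hφ 0 h0m
  -- g is nonvanishing away from 0
  have hgne : ∀ z ∈ ball (0:ℂ) 1, z ≠ 0 → g z ≠ 0 := by
    intro z hz hz0 hgz
    have := hstar z hz hz0
    rw [hgz] at this
    simp at this
    linarith
  -- G = dslope g 0
  set G : ℂ → ℂ := TD g with hG_def
  have hgzG : ∀ z : ℂ, g z = z * G z := by
    intro z
    have h1 := sub_smul_dslope g 0 z
    rw [hg0, sub_zero, sub_zero] at h1
    rw [← h1, smul_eq_mul]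
    rfl
  have hG0 : G 0 = 1 := by rw [hG_def, TD_zero, hg1]
  have hGa : AnalyticAt ℂ G 0 := analyticAt_TD hga
  have hGball : AnalyticOnNhd ℂ G (ball (0:ℂ) 1) := by
    intro z hz
    rcases eq_or_ne z 0 with rfl | hz0
    · exact hGa
    · have h1 : AnalyticAt ℂ (fun y => g y / y) z := (hg z hz).div analyticAt_id hz0
      apply h1.congr
      filter_upwards [isOpen_compl_singleton.mem_nhds hz0] with y hy
      have hy0 : y ≠ (0:ℂ) := hy
      rw [hG_def, TD, dslope_of_ne _ hy0, slope]
      rw [hg0]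
      simp [div_eq_inv_mul]
  have hGne : ∀ z ∈ ball (0:ℂ) 1, G z ≠ 0 := by
    intro z hz
    rcases eq_or_ne z 0 with rfl | hz0
    · rw [hG0]; exact one_ne_zero
    · intro hGz
      apply hgne z hz hz0
      rw [hgzG z, hGz, mul_zero]
  -- coefficient names
  have ha2' : a₂ = tc 2 f := by
    rw [ha₂, iteratedDeriv_eq_tc hfa 2]
    norm_num [Nat.factorial]
  have ha3' : a₃ = tc 3 f := by
    rw [ha₃, iteratedDeriv_eq_tc hfa 3]
    norm_num [Nat.factorial]
  have hB1c : tc 1 φ = (B₁ : ℂ) := by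
    have h1 := iteratedDeriv_eq_tc hφa 1
    rw [hB₁'] at h1
    norm_num [Nat.factorial] at h1
    exact h1.symm
  have hB2c : B₂ = tc 2 φ := by
    rw [hB₂, iteratedDeriv_eq_tc hφa 2]
    norm_num [Nat.factorial]
  -- main equation, divided by -z^2
  have hM : ∀ z ∈ ball (0:ℂ) 1, z ≠ 0 → deriv f z = φ (w z) * (G z * G (-z)) := by
    intro z hz hz0
    have hz' : -z ∈ ball (0:ℂ) 1 := by
      rw [mem_ball_zero_iff] at hz ⊢
      simpa using hz
    have h1 := hsub z hz hz0
    have h2 : g z ≠ 0 := hgne z hz hz0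
    have h3 : g (-z) ≠ 0 := hgne (-z) hz' (neg_ne_zero.2 hz0)
    rw [div_eq_iff (mul_ne_zero h2 h3)] at h1
    have hz2 : -(z^2) ≠ (0:ℂ) := neg_ne_zero.2 (pow_ne_zero _ hz0)
    apply mul_left_cancel₀ hz2
    calc -(z^2) * deriv f z = -(z^2 * deriv f z) := by ring
      _ = φ (w z) * (g z * g (-z)) := h1
      _ = -(z^2) * (φ (w z) * (G z * G (-z))) := by
          rw [hgzG z, hgzG (-z)]; ring
  -- analyticity of compositions
  have analyticAt_comp0 : ∀ {Φ V : ℂ → ℂ}, AnalyticAt ℂ Φ (V 0) → AnalyticAt ℂ V 0 →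
      AnalyticAt ℂ (fun y => Φ (V y)) 0 := by
    intro Φ V hΦ hV
    have := hΦ.comp hV
    exact this
  have hGna : AnalyticAt ℂ (fun y => G (-y)) 0 :=
    analyticAt_comp0 (by simpa using hGa) analyticAt_negfun
  have hΦwa : AnalyticAt ℂ (fun y => φ (w y)) 0 :=
    analyticAt_comp0 (by rw [hw0]; exact hφa) hwa
  have hQa : AnalyticAt ℂ (fun y => G y * G (-y)) 0 := hGa.mul hGna
  have hdfa : AnalyticAt ℂ (deriv f) 0 := hf.deriv 0 h0m
  have hMg : deriv f =ᶠ[𝓝 (0:ℂ)] fun z => (φ (w z)) * (G z * G (-z)) := by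
    apply eventuallyEq_of_punctured
    · have hball : ball (0:ℂ) 1 ∈ 𝓝 (0:ℂ) := isOpen_ball.mem_nhds h0m
      filter_upwards [self_mem_nhdsWithin, mem_nhdsWithin_of_mem_nhds hball] with z hz0 hz
      exact hM z hz hz0
    · exact hdfa.continuousAt
    · exact (hΦwa.mul hQa).continuousAt
  have htc1df : tc 1 (deriv f) = 2 * tc 2 f := by
    rw [tc_deriv hfa hdfa 1]; norm_num
  have htc2df : tc 2 (deriv f) = 3 * tc 3 f := by
    rw [tc_deriv hfa hdfa 2]; norm_num
  have htc1G : tc 1 G = tc 2 g := by rw [hG_def, ← tc_succ]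
  have htc2G : tc 2 G = tc 3 g := by rw [hG_def, ← tc_succ]
  set b2 := tc 2 g with hb2_def
  set b3 := tc 3 g with hb3_def
  set c1 := tc 1 w with hc1_def
  set c2 := tc 2 w with hc2_def
  have htc1Gn : tc 1 (fun y => G (-y)) = -b2 := by
    rw [tc1_comp hGa analyticAt_negfun (by simp), tc1_neg, htc1G]; ring
  have htc2Gn : tc 2 (fun y => G (-y)) = b3 := by
    rw [tc2_comp hGa analyticAt_negfun (by simp), tc1_neg, tc2_neg, htc2G, htc1G]; ring
  have htc1Q : tc 1 (fun y => G y * G (-y)) = 0 := by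
    rw [tc1_mul hGa hGna, htc1Gn, htc1G]
    simp only [neg_zero, hG0]
    ring
  have htc2Q : tc 2 (fun y => G y * G (-y)) = 2*b3 - b2^2 := by
    rw [tc2_mul hGa hGna, htc2Gn, htc1Gn, htc1G, htc2G]
    simp only [neg_zero, hG0]
    ring
  have htc1Φw : tc 1 (fun y => φ (w y)) = (B₁:ℂ) * c1 := by
    rw [tc1_comp hφa hwa hw0, hB1c]
  have htc2Φw : tc 2 (fun y => φ (w y)) = tc 2 φ * c1^2 + (B₁:ℂ) * c2 := by
    rw [tc2_comp hφa hwa hw0, hB1c]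
  have e1 : 2 * tc 2 f = (B₁:ℂ) * c1 := by
    rw [← htc1df, tc_congr hMg 1, tc1_mul hΦwa hQa, htc1Q, htc1Φw]
    simp only [hw0, hφ0, neg_zero, hG0]
    ring
  have e2 : 3 * tc 3 f = tc 2 φ * c1^2 + (B₁:ℂ) * c2 + (2*b3 - b2^2) := by
    rw [← htc2df, tc_congr hMg 2, tc2_mul hΦwa hQa, htc2Q, htc1Q, htc1Φw, htc2Φw]
    simp only [hw0, hφ0, neg_zero, hG0]
    ring
  -- the starlike condition: Schwarz function ω
  have hdga : AnalyticAt ℂ (deriv g) 0 := hg.deriv 0 h0m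
  have hdGball : AnalyticOnNhd ℂ (deriv G) (ball (0:ℂ) 1) := hGball.deriv
  set P : ℂ → ℂ := fun z => 1 + z * deriv G z / G z with hP_def
  have hPball : AnalyticOnNhd ℂ P (ball (0:ℂ) 1) := by
    intro z hz
    exact analyticAt_const.add ((analyticAt_id.mul (hdGball z hz)).div (hGball z hz) (hGne z hz))
  have hP0 : P 0 = 1 := by simp [hP_def]
  have hderivg : ∀ z ∈ ball (0:ℂ) 1, deriv g z = G z + z * deriv G z := by
    intro z hz
    have hev : g =ᶠ[𝓝 z] fun y => y * G y := Filter.Eventually.of_forall hgzG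
    rw [hev.deriv_eq, deriv_fun_mul differentiableAt_fun_id (hGball z hz).differentiableAt]
    simp
  have hPz : ∀ z ∈ ball (0:ℂ) 1, z ≠ 0 → P z = z * deriv g z / g z := by
    intro z hz hz0
    rw [hderivg z hz, hgzG z, hP_def]
    field_simp [hGne z hz]
  have hPre : ∀ z ∈ ball (0:ℂ) 1, 1/2 < (P z).re := by
    intro z hz
    rcases eq_or_ne z 0 with rfl | hz0
    · rw [hP0]; norm_num
    · rw [hPz z hz hz0]; exact hstar z hz hz0
  have hPne : ∀ z ∈ ball (0:ℂ) 1, P z ≠ 0 := by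
    intro z hz h0
    have := hPre z hz
    rw [h0] at this
    simp at this
    linarith
  set ω : ℂ → ℂ := fun z => (P z - 1) / P z with hω_def
  have hωball : AnalyticOnNhd ℂ ω (ball (0:ℂ) 1) := fun z hz =>
    ((hPball z hz).sub analyticAt_const).div (hPball z hz) (hPne z hz)
  have hω0 : ω 0 = 0 := by simp [hω_def, hP0]
  have hωb : ∀ z ∈ ball (0:ℂ) 1, ‖ω z‖ < 1 := fun z hz =>
    re_gt_half_abs_lt_one (hPre z hz)
  have hωa : AnalyticAt ℂ ω 0 := hωball 0 h0m
  have hN : ∀ z ∈ ball (0:ℂ) 1, z ≠ 0 → deriv g z * ω z = deriv g z - G z := by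
    intro z hz hz0
    have hgz : g z ≠ 0 := hgne z hz hz0
    have hPzv := hPz z hz hz0
    have hPnz := hPne z hz
    have hzg' : z * deriv g z ≠ 0 := by
      intro h
      rw [hPzv, h, zero_div] at hPnz
      exact hPnz rfl
    have hdg : deriv g z ≠ 0 := fun h => hzg' (by rw [h, mul_zero])
    have hGz : G z = g z / z := by rw [hgzG z]; field_simp
    have hωz : ω z = (P z - 1) / P z := rfl
    rw [hωz, hPzv, hGz]
    field_simp
  have hNg : (fun z => deriv g z * ω z) =ᶠ[𝓝 (0:ℂ)] fun z => deriv g z - G z := by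
    apply eventuallyEq_of_punctured
    · have hball : ball (0:ℂ) 1 ∈ 𝓝 (0:ℂ) := isOpen_ball.mem_nhds h0m
      filter_upwards [self_mem_nhdsWithin, mem_nhdsWithin_of_mem_nhds hball] with z hz0 hz
      exact hN z hz hz0
    · exact (hdga.mul hωa).continuousAt
    · exact (hdga.sub hGa).continuousAt
  have htc1dg : tc 1 (deriv g) = 2 * b2 := by
    rw [tc_deriv hga hdga 1]; norm_num; rfl
  have htc2dg : tc 2 (deriv g) = 3 * b3 := by
    rw [tc_deriv hga hdga 2]; norm_num; rfl
  set o1 := tc 1 ω with ho1_def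
  set o2 := tc 2 ω with ho2_def
  have n1 : o1 = b2 := by
    have h1 := tc_congr hNg 1
    rw [tc1_mul hdga hωa, tc1_sub hdga hGa] at h1
    simp only [htc1dg, htc1G, hω0, hg1] at h1
    linear_combination h1
  have n2 : o2 + 2*b2*o1 = 2*b3 := by
    have h1 := tc_congr hNg 2
    rw [tc2_mul hdga hωa, tc2_sub hdga hGa] at h1
    simp only [htc1dg, htc2dg, htc1G, htc2G, hω0, hg1] at h1
    linear_combination h1
  -- Schwarz coefficient bounds
  obtain ⟨hc1b, hc2b⟩ := schwarz_tc hw.differentiableOn hw0 hwb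
  obtain ⟨ho1b, ho2b⟩ := schwarz_tc hωball.differentiableOn hω0 hωb
  -- final algebra
  have hb3i : 2*b3 - b2^2 = o2 + o1^2 := by linear_combination -n2 - (o1 - b2) * n1
  have ha2v : a₂ = (B₁:ℂ)*c1/2 := by rw [ha2']; linear_combination (1/2:ℂ) * e1
  have ha3v : a₃ = (B₂*c1^2 + (B₁:ℂ)*c2 + (o2 + o1^2))/3 := by
    rw [ha3', hB2c]; linear_combination (1/3:ℂ) * e2 + (1/3:ℂ) * hb3i
  have key : a₃ - μ * a₂^2 = o2/3 + o1^2/3 + (B₁:ℂ)*c2/3 + (B₂/3 - μ*(B₁:ℂ)^2/4)*c1^2 := by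
    rw [ha3v, ha2v]; ring
  have triangle : ‖a₃ - μ * a₂^2‖ ≤ ‖o2‖/3 + ‖o1‖^2/3
      + B₁ * ‖c2‖/3 + ‖B₂/3 - μ*(B₁:ℂ)^2/4‖ * ‖c1‖^2 := by
    rw [key]
    have t1 := norm_add_le (o2/3 + o1^2/3 + (B₁:ℂ)*c2/3) ((B₂/3 - μ*(B₁:ℂ)^2/4)*c1^2)
    have t2 := norm_add_le (o2/3 + o1^2/3) ((B₁:ℂ)*c2/3)
    have t3 := norm_add_le (o2/3) (o1^2/3)
    have r1 : ‖o2/3‖ = ‖o2‖/3 := by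
      rw [norm_div]; norm_num
    have r2 : ‖o1^2/3‖ = ‖o1‖^2/3 := by
      rw [norm_div, norm_pow]; norm_num
    have r3 : ‖(B₁:ℂ)*c2/3‖ = B₁ * ‖c2‖/3 := by
      rw [norm_div, norm_mul, Complex.norm_real, Real.norm_eq_abs, _root_.abs_of_pos hB₁]; norm_num
    have r4 : ‖(B₂/3 - μ*(B₁:ℂ)^2/4)*c1^2‖
        = ‖B₂/3 - μ*(B₁:ℂ)^2/4‖ * ‖c1‖^2 := by
      rw [norm_mul, norm_pow]
    calc ‖o2/3 + o1^2/3 + (B₁:ℂ)*c2/3 + (B₂/3 - μ*(B₁:ℂ)^2/4)*c1^2‖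
        ≤ ‖o2/3 + o1^2/3 + (B₁:ℂ)*c2/3‖
          + ‖(B₂/3 - μ*(B₁:ℂ)^2/4)*c1^2‖ := t1
      _ ≤ ‖o2/3‖ + ‖o1^2/3‖ + ‖(B₁:ℂ)*c2/3‖
          + ‖(B₂/3 - μ*(B₁:ℂ)^2/4)*c1^2‖ := by linarith
      _ = ‖o2‖/3 + ‖o1‖^2/3 + B₁ * ‖c2‖/3
          + ‖B₂/3 - μ*(B₁:ℂ)^2/4‖ * ‖c1‖^2 := by
          rw [r1, r2, r3, r4]
  have hX1 : B₁/3 ≤ max (B₁/3) (‖(B₂:ℂ)/3 - μ*(B₁:ℂ)^2/4‖) := le_max_left _ _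
  have hX2 : ‖B₂/3 - μ*(B₁:ℂ)^2/4‖
      ≤ max (B₁/3) (‖(B₂:ℂ)/3 - μ*(B₁:ℂ)^2/4‖) := le_max_right _ _
  have hnn1 : 0 ≤ ‖c1‖ := norm_nonneg _
  have hnn2 : 0 ≤ ‖B₂/3 - μ*(B₁:ℂ)^2/4‖ := norm_nonneg _
  have hnn3 : 0 ≤ ‖o1‖ := norm_nonneg _
  have hc1sq : ‖c1‖^2 ≤ 1 := by nlinarith
  refine le_trans triangle ?_
  nlinarith [mul_le_mul_of_nonneg_left hc2b (le_of_lt hB₁),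
    mul_le_mul_of_nonneg_right hX2 (sq_nonneg (‖c1‖)),
    mul_le_mul_of_nonneg_right hX1 (sub_nonneg.2 hc1sq)]
end

section
/- Let φ be analytic on the closed conditions of the unit disk with positive real part, and suppose f is analytic and normalized on 𝔻 with -z²f'(z)/(g(z)g(-z)) = φ(w(z)) for some g starlike of order 1/2 and Schwarz function w. Then for |z| = r < 1, |f'(z)| ≤ M(r)/(1-r²), where M(r) = max_{|ζ|=r} |φ(ζ)|. -/
open Complex Metric Topology Filter

/-- Schwarz lemma for an even map: |ω ζ| ≤ |ζ|². -/
lemma schwarz_even {ω : ℂ → ℂ} (hd : DifferentiableOn ℂ ω (ball 0 1))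
    (h0 : ω 0 = 0) (hmaps : Set.MapsTo ω (ball 0 1) (ball 0 1))
    (heven : ∀ ζ, ω (-ζ) = ω ζ) {ζ : ℂ} (hζ : ζ ∈ ball (0:ℂ) 1) :
    ‖ω ζ‖ ≤ ‖ζ‖ ^ 2 := by
  have hmem : ball (0:ℂ) 1 ∈ 𝓝 (0:ℂ) := isOpen_ball.mem_nhds (by simp)
  set η := dslope ω 0 with hη
  have hηd : DifferentiableOn ℂ η (ball 0 1) := (differentiableOn_dslope hmem).mpr hd
  have hmaps' : Set.MapsTo ω (ball 0 1) (ball (ω 0) 1) := by rwa [h0]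
  have hηb : ∀ x ∈ ball (0:ℂ) 1, ‖η x‖ ≤ 1 := by
    intro x hx
    simpa using Complex.norm_dslope_le_div_of_mapsTo_ball hd (hmaps'.mono_right ball_subset_closedBall) hx
  have hη0 : η 0 = 0 := by
    have h1 : deriv ω 0 = -deriv ω 0 := by
      conv_lhs => rw [show ω = (fun x => ω (-x)) by funext x; rw [heven]]
      rw [deriv_comp_neg, neg_zero]
    have : deriv ω 0 = 0 := by
      have := add_self_eq_zero.mp (by linear_combination h1)
      exact this
    simp [hη, dslope_same, this]
  -- |η x| ≤ |x| via limiting radii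
  have hηle : ‖η ζ‖ ≤ ‖ζ‖ := by
    have key : ∀ ε : ℝ, 0 < ε → ‖η ζ‖ ≤ ‖ζ‖ + ε := by
      intro ε hε
      have hmapsη : Set.MapsTo η (ball 0 1) (ball (η 0) (1 + ε)) := by
        intro x hx
        rw [hη0, mem_ball_zero_iff]
        exact lt_of_le_of_lt (hηb x hx) (by linarith)
      have := Complex.dist_le_div_mul_dist_of_mapsTo_ball hηd (hmapsη.mono_right ball_subset_closedBall) hζ
      rw [hη0, dist_zero_right, dist_zero_right] at this
      have hζ1 : ‖ζ‖ ≤ 1 := le_of_lt (by simpa [mem_ball_zero_iff] using hζ)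
      calc ‖η ζ‖ ≤ (1 + ε) / 1 * ‖ζ‖ := this
        _ = ‖ζ‖ + ε * ‖ζ‖ := by ring
        _ ≤ ‖ζ‖ + ε := by
            have : ε * ‖ζ‖ ≤ ε := by nlinarith [norm_nonneg ζ]
            linarith
    exact le_of_forall_pos_le_add key
  have hfact : ω ζ = ζ * η ζ := by
    have := sub_smul_dslope ω 0 ζ
    simp only [sub_zero, smul_eq_mul, h0] at this
    rw [hη, this]
  rw [hfact, norm_mul, sq]
  exact mul_le_mul_of_nonneg_left hηle (norm_nonneg ζ)

/-- Re(ζ F'/F) ≤ 2|ζ|²/(1-|ζ|²) for F analytic nonvanishing even with F 0 = 1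
and Re(ζF'/F) > -1. -/
lemma re_p_bound {F : ℂ → ℂ} (hFd : DifferentiableOn ℂ F (ball 0 1))
    (hF0 : F 0 = 1) (hFne : ∀ ζ ∈ ball (0:ℂ) 1, F ζ ≠ 0)
    (hFeven : ∀ ζ, F (-ζ) = F ζ)
    (hpre : ∀ ζ ∈ ball (0:ℂ) 1, -1 < (ζ * deriv F ζ / F ζ).re)
    {ζ : ℂ} (hζ : ζ ∈ ball (0:ℂ) 1) :
    (ζ * deriv F ζ / F ζ).re ≤ 2 * ‖ζ‖ ^ 2 / (1 - ‖ζ‖ ^ 2) := by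
  set p : ℂ → ℂ := fun x => x * deriv F x / F x with hp
  have hFa : AnalyticOnNhd ℂ F (ball 0 1) := hFd.analyticOnNhd isOpen_ball
  have hF'a : AnalyticOnNhd ℂ (deriv F) (ball 0 1) := hFa.deriv
  have hpd : DifferentiableOn ℂ p (ball 0 1) := by
    intro x hx
    exact ((differentiableAt_id.mul (hF'a x hx).differentiableAt).div
      (hFa x hx).differentiableAt (hFne x hx)).differentiableWithinAt
  have hp2 : ∀ x ∈ ball (0:ℂ) 1, p x + 2 ≠ 0 := by
    intro x hx h
    have h1 := hpre x hx
    have : (p x).re = -2 := by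
      have : p x = -2 := by linear_combination h
      rw [this]; simp
    rw [hp] at this; simp only at this; linarith [h1]
  have hF'odd : ∀ x : ℂ, deriv F (-x) = -deriv F x := by
    intro x
    have : deriv F x = -deriv F (-x) := by
      conv_lhs => rw [show F = (fun y => F (-y)) by funext y; rw [hFeven]]
      rw [deriv_comp_neg]
    rw [this, neg_neg]
  have hpeven : ∀ x : ℂ, p (-x) = p x := by
    intro x
    simp only [hp, hF'odd, hFeven, mul_neg, neg_mul, neg_neg]
  set ω : ℂ → ℂ := fun x => p x / (p x + 2) with hω
  have hωd : DifferentiableOn ℂ ω (ball 0 1) := by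
    intro x hx
    exact ((hpd x hx).div ((hpd x hx).add (differentiableWithinAt_const 2)) (hp2 x hx))
  have hω0 : ω 0 = 0 := by
    have : p 0 = 0 := by simp [hp]
    simp [hω, this]
  have hωmaps : Set.MapsTo ω (ball 0 1) (ball 0 1) := by
    intro x hx
    rw [mem_ball_zero_iff]
    have h1 := hpre x hx
    have habs : ‖p x‖ < ‖p x + 2‖ := by
      apply lt_of_pow_lt_pow_left₀ 2 (norm_nonneg _)
      rw [Complex.sq_norm, Complex.sq_norm]
      have : normSq (p x + 2) = normSq (p x) + 4 * (p x).re + 4 := by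
        simp [Complex.normSq_apply, Complex.add_re, Complex.add_im]; ring
      rw [this]; linarith
    rw [hω]
    simp only [norm_div]
    rw [div_lt_one (lt_of_le_of_lt (norm_nonneg _) habs)]
    exact habs
  have hωeven : ∀ x : ℂ, ω (-x) = ω x := fun x => by simp [hω, hpeven]
  have hωsq := schwarz_even hωd hω0 hωmaps hωeven hζ
  -- p = 2ω/(1-ω)
  have habsζ : ‖ζ‖ < 1 := by simpa [mem_ball_zero_iff] using hζ
  have ht2 : ‖ζ‖ ^ 2 < 1 := by nlinarith [norm_nonneg ζ]
  have hωlt : ‖ω ζ‖ < 1 := lt_of_le_of_lt hωsq ht2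
  have h1ω : (1 : ℂ) - ω ζ ≠ 0 := by
    intro h
    have : ω ζ = 1 := by linear_combination -h
    rw [this] at hωlt; simp at hωlt
  have ha2 := hp2 ζ hζ
  have hωζ : ω ζ = p ζ / (p ζ + 2) := rfl
  have h1s : 1 - ω ζ = 2 / (p ζ + 2) := by rw [hωζ]; field_simp; ring
  have hpω : p ζ = 2 * ω ζ / (1 - ω ζ) := by
    rw [h1s, hωζ]
    field_simp
  have habs1ω : 1 - ‖ζ‖ ^ 2 ≤ ‖1 - ω ζ‖ := by
    calc 1 - ‖ζ‖ ^ 2 ≤ 1 - ‖ω ζ‖ := by linarith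
      _ ≤ ‖1 - ω ζ‖ := by
          have := norm_sub_norm_le (1:ℂ) (ω ζ)
          simpa using this
  have hple : ‖p ζ‖ ≤ 2 * ‖ζ‖ ^ 2 / (1 - ‖ζ‖ ^ 2) := by
    rw [hpω, norm_div, norm_mul]
    have h2 : ‖(2:ℂ)‖ = 2 := by simp
    rw [h2]
    apply div_le_div₀ (by positivity) (by nlinarith [norm_nonneg (ω ζ)])
      (by linarith) habs1ω
  calc (p ζ).re ≤ ‖p ζ‖ := Complex.re_le_norm _
    _ ≤ _ := hple

lemma F_growth {F : ℂ → ℂ} (hFd : DifferentiableOn ℂ F (ball 0 1))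
    (hF0 : F 0 = 1) (hFne : ∀ ζ ∈ ball (0:ℂ) 1, F ζ ≠ 0)
    (hFeven : ∀ ζ, F (-ζ) = F ζ)
    (hpre : ∀ ζ ∈ ball (0:ℂ) 1, -1 < (ζ * deriv F ζ / F ζ).re)
    {z : ℂ} (hz : z ∈ ball (0:ℂ) 1) :
    ‖F z‖ ≤ 1 / (1 - ‖z‖ ^ 2) := by
  rcases eq_or_ne z 0 with rfl | hz0
  · simp [hF0]
  set r : ℝ := ‖z‖ with hr
  have hr0 : 0 < r := by simpa [hr] using norm_pos_iff.mpr hz0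
  have hr1 : r < 1 := by simpa [hr, mem_ball_zero_iff] using hz
  set c : ℂ := z / (r : ℂ) with hc
  have hrC : (r : ℂ) ≠ 0 := by exact_mod_cast hr0.ne'
  have habsc : ‖c‖ = 1 := by
    rw [hc, norm_div, Complex.norm_real, Real.norm_eq_abs, abs_of_pos hr0, ← hr, div_self hr0.ne']
  have hγmem : ∀ s : ℝ, s ∈ Set.Icc 0 r → ((s : ℂ) * c) ∈ ball (0:ℂ) 1 := by
    intro s hs
    rw [mem_ball_zero_iff, norm_mul]
    rw [habsc, mul_one, Complex.norm_real, Real.norm_eq_abs, _root_.abs_of_nonneg hs.1]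
    linarith [hs.2]
  have habsγ : ∀ s : ℝ, 0 ≤ s → ‖(s : ℂ) * c‖ = s := by
    intro s hs
    rw [norm_mul, habsc, mul_one, Complex.norm_real, Real.norm_eq_abs, _root_.abs_of_nonneg hs]
  set U : ℝ → ℝ := fun s => Real.log (normSq (F ((s : ℂ) * c))) + 2 * Real.log (1 - s ^ 2)
    with hU
  -- continuity on Icc 0 r
  have hFc : ContinuousOn F (ball (0:ℂ) 1) := hFd.continuousOn
  have hγc : ContinuousOn (fun s : ℝ => (s : ℂ) * c) (Set.Icc 0 r) :=
    (Complex.continuous_ofReal.mul continuous_const).continuousOn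
  have hFγc : ContinuousOn (fun s : ℝ => F ((s : ℂ) * c)) (Set.Icc 0 r) :=
    hFc.comp hγc hγmem
  have hUc : ContinuousOn U (Set.Icc 0 r) := by
    apply ContinuousOn.add
    · exact (Complex.continuous_normSq.continuousOn.comp hFγc (Set.mapsTo_univ _ _)).log
        (fun s hs => fun h => (hFne _ (hγmem s hs)) (Complex.normSq_eq_zero.mp h))
    · exact continuousOn_const.mul ((continuousOn_const.sub (continuous_pow 2).continuousOn).log
        (fun s hs => by simp only [Pi.sub_apply]; nlinarith [hs.1, hs.2]))
  -- derivative on interior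
  have hderiv : ∀ s ∈ Set.Ioo (0:ℝ) r, HasDerivAt U
      (2 * ((((s:ℂ)*c) * deriv F ((s:ℂ)*c) / F ((s:ℂ)*c)).re) / s - 4 * s / (1 - s^2)) s := by
    intro s hs
    have hsr : s ∈ Set.Icc 0 r := ⟨hs.1.le, hs.2.le⟩
    have hζB : ((s:ℂ)*c) ∈ ball (0:ℂ) 1 := hγmem s hsr
    have hs0 : (0:ℝ) < s := hs.1
    set ζ : ℂ := (s:ℂ)*c with hζdef
    have hFζ : F ζ ≠ 0 := hFne _ hζB
    have hFda : DifferentiableAt ℂ F ζ := hFd.differentiableAt (isOpen_ball.mem_nhds hζB)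
    set D : ℂ := deriv F ζ * c with hD
    have hdγ : HasDerivAt (fun t : ℝ => F ((t:ℂ)*c)) D s := by
      have h1 : HasDerivAt (fun w : ℂ => F (w * c)) D (s:ℂ) := by
        have hm : HasDerivAt (fun w : ℂ => w * c) c (s:ℂ) := hasDerivAt_mul_const c
        have := hFda.hasDerivAt.comp (s:ℂ) hm
        exact this
      exact h1.comp_ofReal
    have hre : HasDerivAt (fun t : ℝ => (F ((t:ℂ)*c)).re) D.re s :=
      Complex.reCLM.hasFDerivAt.comp_hasDerivAt s hdγ
    have him : HasDerivAt (fun t : ℝ => (F ((t:ℂ)*c)).im) D.im s :=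
      Complex.imCLM.hasFDerivAt.comp_hasDerivAt s hdγ
    have hN : HasDerivAt (fun t : ℝ => normSq (F ((t:ℂ)*c)))
        (D.re * (F ζ).re + (F ζ).re * D.re + (D.im * (F ζ).im + (F ζ).im * D.im)) s := by
      have := (hre.mul hre).add (him.mul him)
      exact this
    have hlog1 : HasDerivAt (fun t : ℝ => Real.log (normSq (F ((t:ℂ)*c))))
        ((D.re * (F ζ).re + (F ζ).re * D.re + (D.im * (F ζ).im + (F ζ).im * D.im)) /
          normSq (F ζ)) s := hN.log (fun h => hFζ (Complex.normSq_eq_zero.mp h))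
    have h1s2 : 1 - s^2 ≠ 0 := by nlinarith [hs.2, hr1, hs.1]
    have hlog2 : HasDerivAt (fun t : ℝ => 2 * Real.log (1 - t ^ 2)) (2 * (-(2*s) / (1 - s^2))) s := by
      have h2 : HasDerivAt (fun t : ℝ => 1 - t^2) (-(2*s)) s := by
        simpa using (hasDerivAt_pow 2 s).const_sub 1
      exact (h2.log h1s2).const_mul 2
    have := hlog1.add hlog2
    refine HasDerivAt.congr_deriv this ?_
    have hrw : (ζ * deriv F ζ / F ζ).re = s * (D / F ζ).re := by
      have : ζ * deriv F ζ / F ζ = (s:ℂ) * (D / F ζ) := by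
        rw [hζdef, hD]; ring
      rw [this, Complex.re_ofReal_mul]
    rw [hrw]
    have hcan : 2 * (s * (D / F ζ).re) / s = 2 * (D / F ζ).re := by
      field_simp [hs0.ne']
    have hnz : normSq (F ζ) ≠ 0 := fun h => hFζ (Complex.normSq_eq_zero.mp h)
    rw [hcan, Complex.div_re]
    field_simp [hnz]
    ring
  -- comparison
  have hanti : AntitoneOn U (Set.Icc 0 r) := by
    apply antitoneOn_of_deriv_nonpos (convex_Icc 0 r) hUc
    · intro s hs
      rw [interior_Icc] at hs
      exact ((hderiv s hs).differentiableAt).differentiableWithinAt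
    · intro s hs
      rw [interior_Icc] at hs
      rw [(hderiv s hs).deriv]
      have hsr : s ∈ Set.Icc 0 r := ⟨hs.1.le, hs.2.le⟩
      have hζB := hγmem s hsr
      have habs : ‖(s:ℂ)*c‖ = s := habsγ s hs.1.le
      have hb := re_p_bound hFd hF0 hFne hFeven hpre hζB
      rw [habs] at hb
      have hs0 : 0 < s := hs.1
      have h1s2 : 0 < 1 - s^2 := by nlinarith [hs.2, hr1]
      calc 2 * (((s:ℂ)*c) * deriv F ((s:ℂ)*c) / F ((s:ℂ)*c)).re / s - 4 * s / (1 - s^2)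
          ≤ 2 * (2 * s^2 / (1 - s^2)) / s - 4 * s / (1 - s^2) := by
            apply sub_le_sub_right
            gcongr
        _ = 0 := by field_simp [hs0.ne', h1s2.ne']; ring
  have hU0 : U 0 = 0 := by
    simp [hU, hF0]
  have hUr : U r ≤ 0 := by
    have := hanti (Set.left_mem_Icc.mpr hr0.le) (Set.right_mem_Icc.mpr hr0.le) hr0.le
    rwa [hU0] at this
  have hzc : ((r:ℝ):ℂ) * c = z := by rw [hc]; field_simp
  rw [hU] at hUr
  simp only [hzc] at hUr
  have h1r2 : 0 < 1 - r^2 := by nlinarith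
  have hNpos : 0 < normSq (F z) := Complex.normSq_pos.mpr (hFne z hz)
  have hlog : Real.log (normSq (F z)) ≤ Real.log (((1 - r^2)⁻¹)^2) := by
    have : Real.log (((1 - r^2)⁻¹)^2) = -(2 * Real.log (1 - r^2)) := by
      rw [Real.log_pow, Real.log_inv]; push_cast; ring
    rw [this]; linarith
  have hN : normSq (F z) ≤ ((1 - r^2)⁻¹)^2 :=
    (Real.log_le_log_iff hNpos (by positivity)).mp hlog
  have hsq : ‖F z‖^2 ≤ ((1 - r^2)⁻¹)^2 := by
    rw [Complex.sq_norm]; exact hN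
  rw [one_div]
  nlinarith [norm_nonneg (F z), inv_pos.mpr h1r2]

theorem distortion_upper_Ks (f g w φ : ℂ → ℂ)
    (hf : AnalyticOnNhd ℂ f (ball (0:ℂ) 1)) (hf0 : f 0 = 0) (hf1 : deriv f 0 = 1)
    (hg : AnalyticOnNhd ℂ g (ball (0:ℂ) 1)) (hg0 : g 0 = 0) (hg1 : deriv g 0 = 1)
    (hstar : ∀ z ∈ ball (0:ℂ) 1, z ≠ 0 → 1 / 2 < (z * deriv g z / g z).re)
    (hw : AnalyticOnNhd ℂ w (ball (0:ℂ) 1)) (hw0 : w 0 = 0)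
    (hwb : ∀ z ∈ ball (0:ℂ) 1, ‖w z‖ < 1)
    (hφ : AnalyticOnNhd ℂ φ (ball (0:ℂ) 1)) (hφre : ∀ z ∈ ball (0:ℂ) 1, 0 < (φ z).re)
    (hsub : ∀ z ∈ ball (0:ℂ) 1, z ≠ 0 →
      -(z ^ 2 * deriv f z) / (g z * g (-z)) = φ (w z))
    (r : ℝ) (hr : r < 1) (z : ℂ) (hz : ‖z‖ = r)
    (M : ℝ) (hM : IsGreatest {x : ℝ | ∃ ζ : ℂ, ‖ζ‖ = r ∧ x = ‖φ ζ‖} M) :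
    ‖deriv f z‖ ≤ M / (1 - r ^ 2) := by
  have h0B : (0:ℂ) ∈ ball (0:ℂ) 1 := by simp
  have hmem : ball (0:ℂ) 1 ∈ 𝓝 (0:ℂ) := isOpen_ball.mem_nhds h0B
  have hnegB : ∀ ζ : ℂ, ζ ∈ ball (0:ℂ) 1 → -ζ ∈ ball (0:ℂ) 1 := by
    intro ζ hζ; simpa [mem_ball_zero_iff] using hζ
  set g₁ : ℂ → ℂ := dslope g 0 with hg₁
  have hg₁d : DifferentiableOn ℂ g₁ (ball 0 1) :=
    (differentiableOn_dslope hmem).mpr hg.differentiableOn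
  have hgfact : ∀ ζ : ℂ, g ζ = ζ * g₁ ζ := by
    intro ζ
    have := sub_smul_dslope g 0 ζ
    simp only [sub_zero, smul_eq_mul, hg0] at this
    rw [hg₁, this]
  have hg₁0 : g₁ 0 = 1 := by rw [hg₁, dslope_same, hg1]
  have hgne : ∀ ζ ∈ ball (0:ℂ) 1, ζ ≠ 0 → g ζ ≠ 0 := by
    intro ζ hζ hζ0 hgz
    have := hstar ζ hζ hζ0
    rw [hgz] at this
    simp at this
    linarith
  have hg₁ne : ∀ ζ ∈ ball (0:ℂ) 1, g₁ ζ ≠ 0 := by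
    intro ζ hζ
    rcases eq_or_ne ζ 0 with rfl | hζ0
    · rw [hg₁0]; exact one_ne_zero
    · intro h
      exact hgne ζ hζ hζ0 (by rw [hgfact ζ, h, mul_zero])
  set F : ℂ → ℂ := fun ζ => g₁ ζ * g₁ (-ζ) with hF
  have hg₁At : ∀ ζ ∈ ball (0:ℂ) 1, DifferentiableAt ℂ g₁ ζ := fun ζ hζ =>
    hg₁d.differentiableAt (isOpen_ball.mem_nhds hζ)
  have hFAt : ∀ ζ ∈ ball (0:ℂ) 1, DifferentiableAt ℂ F ζ := by
    intro ζ hζ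
    exact (hg₁At ζ hζ).mul ((hg₁At _ (hnegB ζ hζ)).comp ζ differentiable_neg.differentiableAt)
  have hFd : DifferentiableOn ℂ F (ball 0 1) := fun ζ hζ => (hFAt ζ hζ).differentiableWithinAt
  have hF0 : F 0 = 1 := by simp [hF, hg₁0]
  have hFne : ∀ ζ ∈ ball (0:ℂ) 1, F ζ ≠ 0 := fun ζ hζ =>
    mul_ne_zero (hg₁ne ζ hζ) (hg₁ne _ (hnegB ζ hζ))
  have hFeven : ∀ ζ, F (-ζ) = F ζ := by intro ζ; simp [hF, neg_neg, mul_comm]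
  -- derivative formulas
  have hgderiv : ∀ ζ ∈ ball (0:ℂ) 1, deriv g ζ = g₁ ζ + ζ * deriv g₁ ζ := by
    intro ζ hζ
    have h1 : HasDerivAt (fun x : ℂ => x * g₁ x) (1 * g₁ ζ + ζ * deriv g₁ ζ) ζ :=
      (hasDerivAt_id ζ).mul (hg₁At ζ hζ).hasDerivAt
    have : HasDerivAt g (1 * g₁ ζ + ζ * deriv g₁ ζ) ζ := by
      rw [show g = fun x : ℂ => x * g₁ x from funext hgfact]
      exact h1
    rw [this.deriv]; ring
  have hFderiv : ∀ ζ ∈ ball (0:ℂ) 1,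
      deriv F ζ = deriv g₁ ζ * g₁ (-ζ) - g₁ ζ * deriv g₁ (-ζ) := by
    intro ζ hζ
    have h2 : HasDerivAt (fun x : ℂ => g₁ (-x)) (deriv g₁ (-ζ) * (-1)) ζ :=
      (hg₁At _ (hnegB ζ hζ)).hasDerivAt.comp ζ (hasDerivAt_neg ζ)
    have h3 : HasDerivAt F (deriv g₁ ζ * g₁ (-ζ) + g₁ ζ * (deriv g₁ (-ζ) * (-1))) ζ :=
      (hg₁At ζ hζ).hasDerivAt.mul h2
    rw [h3.deriv]; ring
  have hpre : ∀ ζ ∈ ball (0:ℂ) 1, -1 < (ζ * deriv F ζ / F ζ).re := by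
    intro ζ hζ
    rcases eq_or_ne ζ 0 with rfl | hζ0
    · simp
    · have hζn := hnegB ζ hζ
      have hζn0 : -ζ ≠ 0 := neg_ne_zero.mpr hζ0
      have hA := hstar ζ hζ hζ0
      have hA' := hstar (-ζ) hζn hζn0
      have ha : g₁ ζ ≠ 0 := hg₁ne ζ hζ
      have hb : g₁ (-ζ) ≠ 0 := hg₁ne _ hζn
      have hkey : ζ * deriv F ζ / F ζ =
          (ζ * deriv g ζ / g ζ) + ((-ζ) * deriv g (-ζ) / g (-ζ)) - 2 := by
        rw [hFderiv ζ hζ, hgderiv ζ hζ, hgderiv (-ζ) hζn, hgfact ζ, hgfact (-ζ)]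
        simp only [hF]
        field_simp
        ring
      rw [hkey]
      simp only [Complex.sub_re, Complex.add_re]
      have : ((2:ℂ)).re = 2 := by simp
      rw [this]
      linarith
  -- key identity for deriv f
  have hfkey : ∀ ζ ∈ ball (0:ℂ) 1, ζ ≠ 0 → deriv f ζ = φ (w ζ) * F ζ := by
    intro ζ hζ hζ0
    have hs := hsub ζ hζ hζ0
    have hgg : g ζ * g (-ζ) = -(ζ^2 * F ζ) := by
      rw [hgfact ζ, hgfact (-ζ)]; simp only [hF]; ring
    rw [hgg] at hs
    have hζ2 : (ζ:ℂ)^2 ≠ 0 := pow_ne_zero 2 hζ0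
    have hFζ : F ζ ≠ 0 := hFne ζ hζ
    rw [neg_div_neg_eq, div_eq_iff (mul_ne_zero hζ2 hFζ)] at hs
    have h' : ζ^2 * deriv f ζ = ζ^2 * (φ (w ζ) * F ζ) := by
      linear_combination hs
    exact mul_left_cancel₀ hζ2 h' 
  rcases eq_or_ne z 0 with rfl | hz0
  · -- z = 0 case
    have hr0 : r = 0 := by simpa using hz.symm
    obtain ⟨ζ₀, hζ₀, hMval⟩ := hM.1
    have hζ₀0 : ζ₀ = 0 := by
      rw [hr0] at hζ₀
      exact norm_eq_zero.mp hζ₀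
    have hφ0 : φ 0 = 1 := by
      have ht1 : Tendsto (fun ζ => φ (w ζ)) (𝓝[≠] (0:ℂ)) (𝓝 (φ 0)) := by
        have hwc : ContinuousAt w 0 := (hw 0 h0B).continuousAt
        have hφc : ContinuousAt φ 0 := (hφ 0 h0B).continuousAt
        have : ContinuousAt (fun ζ => φ (w ζ)) 0 :=
          ContinuousAt.comp (by rwa [hw0]) hwc
        have h := this.tendsto
        rw [hw0] at h
        exact h.mono_left nhdsWithin_le_nhds
      have ht2 : Tendsto (fun ζ => φ (w ζ)) (𝓝[≠] (0:ℂ)) (𝓝 1) := by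
        have hf'c : ContinuousAt (deriv f) 0 := ((hf.deriv) 0 h0B).continuousAt
        have hFc : ContinuousAt F 0 := (hFAt 0 h0B).continuousAt
        have ht : Tendsto (fun ζ => deriv f ζ / F ζ) (𝓝 (0:ℂ)) (𝓝 (deriv f 0 / F 0)) :=
          hf'c.tendsto.div hFc.tendsto (by rw [hF0]; exact one_ne_zero)
        rw [hf1, hF0, div_one] at ht
        have hev : (fun ζ => φ (w ζ)) =ᶠ[𝓝[≠] (0:ℂ)] (fun ζ => deriv f ζ / F ζ) := by
          filter_upwards [mem_nhdsWithin_of_mem_nhds hmem, self_mem_nhdsWithin] with ζ hζB hζ0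
          rw [hfkey ζ hζB hζ0, mul_div_assoc, div_self (hFne ζ hζB), mul_one]
        exact Filter.Tendsto.congr' hev.symm (ht.mono_left nhdsWithin_le_nhds)
      exact tendsto_nhds_unique ht1 ht2
    rw [hf1, hr0]
    rw [hζ₀0, hφ0] at hMval
    simp at hMval
    rw [hMval]
    norm_num
  · -- z ≠ 0 case
    have hzB : z ∈ ball (0:ℂ) 1 := by rwa [mem_ball_zero_iff, hz]
    have hrpos : 0 < r := hz ▸ norm_pos_iff.mpr hz0
    have hMnonneg : 0 ≤ M := by
      obtain ⟨ζ₀, _, hMval⟩ := hM.1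
      rw [hMval]; exact norm_nonneg _
    -- Schwarz for w
    have hwmaps : Set.MapsTo w (ball 0 1) (ball 0 1) := by
      intro x hx; rw [mem_ball_zero_iff]; exact hwb x hx
    have hwle : ‖w z‖ ≤ r := by
      rw [← hz]
      exact Complex.norm_le_norm_of_mapsTo_ball hw.differentiableOn (hwmaps.mono_right ball_subset_closedBall) hw0
        (by rw [hz]; exact hr)
    -- maximum modulus for φ
    have hφwb : ‖φ (w z)‖ ≤ M := by
      have hball : ball (0:ℂ) r ⊆ ball (0:ℂ) 1 := ball_subset_ball hr.le
      have hcl : closure (ball (0:ℂ) r) = closedBall (0:ℂ) r := closure_ball _ hrpos.ne'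
      have hclsub : closure (ball (0:ℂ) r) ⊆ ball (0:ℂ) 1 := by
        rw [hcl]; exact closedBall_subset_ball hr
      have hdc : DiffContOnCl ℂ φ (ball (0:ℂ) r) :=
        ⟨hφ.differentiableOn.mono hball, hφ.continuousOn.mono hclsub⟩
      have := Complex.norm_le_of_forall_mem_frontier_norm_le isBounded_ball hdc
        (C := M) ?_ (z := w z) ?_
      · exact this
      · intro x hx
        rw [frontier_ball _ hrpos.ne'] at hx
        have : ‖x‖ = r := by
          rw [mem_sphere_zero_iff_norm] at hx
          exact hx
        exact hM.2 ⟨x, this, rfl⟩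
      · rw [hcl, mem_closedBall_zero_iff]
        exact hwle
    have hFb : ‖F z‖ ≤ 1 / (1 - r ^ 2) := by
      have := F_growth hFd hF0 hFne hFeven hpre hzB
      rwa [hz] at this
    rw [hfkey z hzB hz0, norm_mul]
    calc ‖φ (w z)‖ * ‖F z‖ ≤ M * (1 / (1 - r^2)) :=
          mul_le_mul hφwb hFb (norm_nonneg _) hMnonneg
      _ = M / (1 - r^2) := by rw [mul_one_div]
end

section
/- Under the same hypotheses (f in K_s(φ)), for |z| = r < 1 one has the lower bound |f'(z)| ≥ m(r)/(1+r²), where m(r) = min_{|ζ|=r} |φ(ζ)|. -/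
open Complex Metric Filter Topology

lemma schwarz_sq {ψ : ℂ → ℂ} (hd : DifferentiableOn ℂ ψ (ball 0 1))
    (h0 : ψ 0 = 0) (h1 : deriv ψ 0 = 0)
    (hb : ∀ ζ ∈ ball (0:ℂ) 1, ‖ψ ζ‖ < 1)
    {ζ : ℂ} (hζ : ζ ∈ ball (0:ℂ) 1) :
    ‖ψ ζ‖ ≤ ‖ζ‖ ^ 2 := by
  rcases eq_or_ne ζ 0 with rfl | hζ0
  · simp [h0]
  have habs : ‖ζ‖ < 1 := mem_ball_zero_iff.1 hζ
  set ψ₁ := dslope ψ 0 with hψ₁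
  have hψ₁d : DifferentiableOn ℂ ψ₁ (ball 0 1) :=
    (Complex.differentiableOn_dslope (isOpen_ball.mem_nhds (by simp))).2 hd
  have key : ∀ ρ : ℝ, Real.sqrt (‖ζ‖) < ρ → ρ < 1 →
      ‖ψ ζ‖ ≤ ‖ζ‖ ^ 2 / ρ ^ 3 := by
    intro ρ hρ1 hρ2
    have hρpos : 0 < ρ := lt_of_le_of_lt (Real.sqrt_nonneg _) hρ1
    have hζρ2 : ‖ζ‖ < ρ ^ 2 := by
      have := Real.sq_sqrt (norm_nonneg ζ)
      nlinarith [Real.sqrt_nonneg (‖ζ‖)]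
    have hρ2ρ : ρ ^ 2 < ρ := by nlinarith
    have hζρ : ‖ζ‖ < ρ := hζρ2.trans hρ2ρ
    have hsub : ball (0:ℂ) ρ ⊆ ball 0 1 := ball_subset_ball hρ2.le
    -- step 1
    have hmaps1 : Set.MapsTo ψ (ball 0 ρ) (ball (ψ 0) 1) := by
      intro x hx
      rw [h0, mem_ball_zero_iff]
      exact hb x (hsub hx)
    have hstep1 : ∀ x ∈ ball (0:ℂ) ρ, ‖ψ₁ x‖ ≤ 1 / ρ := fun x hx =>
      Complex.norm_dslope_le_div_of_mapsTo_ball (hd.mono hsub) (hmaps1.mono_right ball_subset_closedBall) hx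
    have hψ₁0 : ψ₁ 0 = 0 := by rw [hψ₁, dslope_same, h1]
    have hmaps2 : Set.MapsTo ψ₁ (ball 0 ρ) (ball (ψ₁ 0) (1 / ρ ^ 2)) := by
      intro x hx
      rw [hψ₁0, mem_ball_zero_iff]
      calc ‖ψ₁ x‖ ≤ 1 / ρ := hstep1 x hx
        _ < 1 / ρ ^ 2 := by
          apply div_lt_div_of_pos_left one_pos (by positivity) hρ2ρ
    have hstep2 : ‖dslope ψ₁ 0 ζ‖ ≤ (1 / ρ ^ 2) / ρ :=
      Complex.norm_dslope_le_div_of_mapsTo_ball (hψ₁d.mono hsub) (hmaps2.mono_right ball_subset_closedBall)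
        (mem_ball_zero_iff.2 hζρ)
    have e1 : ψ ζ = ζ * ψ₁ ζ := by
      have := sub_smul_dslope ψ 0 ζ
      simp only [sub_zero, h0, smul_eq_mul] at this
      rw [← this, hψ₁]
    have e2 : ψ₁ ζ = ζ * dslope ψ₁ 0 ζ := by
      have := sub_smul_dslope ψ₁ 0 ζ
      simp only [sub_zero, hψ₁0, smul_eq_mul] at this
      rw [← this]
    calc ‖ψ ζ‖ = ‖ζ‖ ^ 2 * ‖dslope ψ₁ 0 ζ‖ := by
          rw [e1, e2, norm_mul, norm_mul]; ring
      _ ≤ ‖ζ‖ ^ 2 * ((1 / ρ ^ 2) / ρ) := by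
          apply mul_le_mul_of_nonneg_left hstep2 (by positivity)
      _ = ‖ζ‖ ^ 2 / ρ ^ 3 := by rw [div_div, mul_one_div, ← pow_succ]
  have hsq1 : Real.sqrt (‖ζ‖) < 1 := by
    rw [show (1:ℝ) = Real.sqrt 1 by simp]
    exact Real.sqrt_lt_sqrt (norm_nonneg ζ) habs
  have htend : Tendsto (fun ρ : ℝ => ‖ζ‖ ^ 2 / ρ ^ 3) (𝓝[<] (1:ℝ))
      (𝓝 (‖ζ‖ ^ 2)) := by
    have : ContinuousAt (fun ρ : ℝ => ‖ζ‖ ^ 2 / ρ ^ 3) 1 := by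
      apply ContinuousAt.div continuousAt_const (by fun_prop)
      norm_num
    simpa using this.continuousWithinAt.tendsto
  refine ge_of_tendsto htend ?_
  filter_upwards [Ioo_mem_nhdsLT hsq1] with ρ hρ
  exact key ρ hρ.1 hρ.2

noncomputable def pp (g : ℂ → ℂ) : ℂ → ℂ := fun z => dslope g 0 z * dslope g 0 (-z)

lemma pp_zero {g : ℂ → ℂ} (hg1 : deriv g 0 = 1) : pp g 0 = 1 := by
  simp [pp, dslope_same, hg1]

lemma pp_even {g : ℂ → ℂ} (z : ℂ) : pp g (-z) = pp g z := by
  simp [pp, neg_neg, mul_comm]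

lemma dslope_at {g : ℂ → ℂ} (hg0 : g 0 = 0) (z : ℂ) (hz : z ≠ 0) :
    dslope g 0 z = g z / z := by
  rw [dslope_of_ne _ hz, slope_def_field, hg0, sub_zero, sub_zero]

lemma pp_eq {g : ℂ → ℂ} (hg0 : g 0 = 0) (z : ℂ) (hz : z ≠ 0) :
    pp g z = -(g z * g (-z)) / z ^ 2 := by
  rw [pp, dslope_at hg0 z hz, dslope_at hg0 (-z) (neg_ne_zero.2 hz),
    div_mul_div_comm]
  rw [show z * -z = -z^2 by ring, div_neg, neg_div]

lemma dslope_diff {g : ℂ → ℂ} (hg : AnalyticOnNhd ℂ g (ball (0:ℂ) 1)) :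
    DifferentiableOn ℂ (dslope g 0) (ball 0 1) :=
  (Complex.differentiableOn_dslope (isOpen_ball.mem_nhds (by simp))).2 hg.differentiableOn

lemma pp_diff {g : ℂ → ℂ} (hg : AnalyticOnNhd ℂ g (ball (0:ℂ) 1)) :
    DifferentiableOn ℂ (pp g) (ball 0 1) := by
  apply DifferentiableOn.mul (dslope_diff hg)
  apply DifferentiableOn.comp (dslope_diff hg) differentiable_neg.differentiableOn
  intro x hx
  simpa using hx

lemma pp_analytic {g : ℂ → ℂ} (hg : AnalyticOnNhd ℂ g (ball (0:ℂ) 1)) :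
    AnalyticOnNhd ℂ (pp g) (ball 0 1) :=
  (pp_diff hg).analyticOnNhd isOpen_ball

lemma g_ne_zero {g : ℂ → ℂ}
    (hstar : ∀ z ∈ ball (0:ℂ) 1, z ≠ 0 → 1 / 2 < (z * deriv g z / g z).re)
    {z : ℂ} (hz : z ∈ ball (0:ℂ) 1) (hz0 : z ≠ 0) : g z ≠ 0 := by
  intro h
  have := hstar z hz hz0
  rw [h, div_zero] at this
  norm_num at this

lemma pp_ne_zero {g : ℂ → ℂ} (hg0 : g 0 = 0) (hg1 : deriv g 0 = 1)
    (hstar : ∀ z ∈ ball (0:ℂ) 1, z ≠ 0 → 1 / 2 < (z * deriv g z / g z).re)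
    {z : ℂ} (hz : z ∈ ball (0:ℂ) 1) : pp g z ≠ 0 := by
  rcases eq_or_ne z 0 with rfl | hz0
  · rw [pp_zero hg1]; exact one_ne_zero
  · have hz' : -z ∈ ball (0:ℂ) 1 := by simpa using hz
    rw [pp_eq hg0 z hz0]
    apply div_ne_zero _ (pow_ne_zero 2 hz0)
    simpa using mul_ne_zero (g_ne_zero hstar hz hz0)
      (g_ne_zero hstar hz' (neg_ne_zero.2 hz0))

lemma pp_deriv_odd {g : ℂ → ℂ} (hg : AnalyticOnNhd ℂ g (ball (0:ℂ) 1))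
    {z : ℂ} (hz : z ∈ ball (0:ℂ) 1) : deriv (pp g) (-z) = -deriv (pp g) z := by
  have hz' : -z ∈ ball (0:ℂ) 1 := by simpa using hz
  have hd : HasDerivAt (pp g) (deriv (pp g) (-z)) (-z) :=
    (((pp_diff hg) (-z) hz').differentiableAt (isOpen_ball.mem_nhds hz')).hasDerivAt
  have hcomp : HasDerivAt (fun x => pp g (-x)) (deriv (pp g) (-z) * -1) z :=
    hd.comp z (hasDerivAt_neg z)
  have : (fun x => pp g (-x)) = pp g := funext fun x => pp_even x
  rw [this] at hcomp
  have := hcomp.deriv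
  rw [this]; ring

noncomputable def ss (g : ℂ → ℂ) : ℂ → ℂ := fun z => 1 + z * deriv (pp g) z / pp g z

lemma ss_zero {g : ℂ → ℂ} : ss g 0 = 1 := by simp [ss]

lemma ss_even {g : ℂ → ℂ} (hg : AnalyticOnNhd ℂ g (ball (0:ℂ) 1))
    {z : ℂ} (hz : z ∈ ball (0:ℂ) 1) : ss g (-z) = ss g z := by
  rw [ss, ss, pp_deriv_odd hg hz, pp_even]
  ring_nf

lemma pp_hasDerivAt {g : ℂ → ℂ} (hg : AnalyticOnNhd ℂ g (ball (0:ℂ) 1))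
    (hg0 : g 0 = 0) {z : ℂ} (hz : z ∈ ball (0:ℂ) 1) (hz0 : z ≠ 0) :
    HasDerivAt (pp g)
      (-(deriv g z * g (-z) + g z * -deriv g (-z)) * (z ^ 2)⁻¹ +
        -(g z * g (-z)) * (-(↑2 * z ^ 1) / (z ^ 2) ^ 2)) z := by
  have hz' : -z ∈ ball (0:ℂ) 1 := by simpa using hz
  have h1 : HasDerivAt g (deriv g z) z := ((hg z hz).differentiableAt).hasDerivAt
  have h2 : HasDerivAt (fun x => g (-x)) (-deriv g (-z)) z := by
    have := (((hg (-z) hz').differentiableAt).hasDerivAt).comp z (hasDerivAt_neg z)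
    simpa [mul_comm, Function.comp_def] using this
  have h3 : HasDerivAt (fun x : ℂ => ((x ^ 2)⁻¹)) (-(↑2 * z ^ 1) / (z ^ 2) ^ 2) z :=
    (hasDerivAt_pow 2 z).inv (pow_ne_zero 2 hz0)
  have h4 : HasDerivAt (fun x => -(g x * g (-x)))
      (-(deriv g z * g (-z) + g z * -deriv g (-z))) z := (h1.mul h2).neg
  have h5 := h4.mul h3
  have heq : pp g =ᶠ[𝓝 z] fun x => -(g x * g (-x)) * (x ^ 2)⁻¹ := by
    filter_upwards [eventually_ne_nhds hz0] with x hx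
    rw [pp_eq hg0 x hx, div_eq_mul_inv]
  exact HasDerivAt.congr_of_eventuallyEq h5 heq

lemma ss_eq {g : ℂ → ℂ} (hg : AnalyticOnNhd ℂ g (ball (0:ℂ) 1)) (hg0 : g 0 = 0)
    (hstar : ∀ z ∈ ball (0:ℂ) 1, z ≠ 0 → 1 / 2 < (z * deriv g z / g z).re)
    {z : ℂ} (hz : z ∈ ball (0:ℂ) 1) (hz0 : z ≠ 0) :
    ss g z = z * deriv g z / g z + (-z) * deriv g (-z) / g (-z) - 1 := by
  have hz' : -z ∈ ball (0:ℂ) 1 := by simpa using hz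
  have hgz : g z ≠ 0 := g_ne_zero hstar hz hz0
  have hgz' : g (-z) ≠ 0 := g_ne_zero hstar hz' (neg_ne_zero.2 hz0)
  have hD := (pp_hasDerivAt hg hg0 hz hz0).deriv
  rw [ss, hD, pp_eq hg0 z hz0]
  field_simp
  ring

lemma ss_re_pos {g : ℂ → ℂ} (hg : AnalyticOnNhd ℂ g (ball (0:ℂ) 1)) (hg0 : g 0 = 0)
    (hstar : ∀ z ∈ ball (0:ℂ) 1, z ≠ 0 → 1 / 2 < (z * deriv g z / g z).re)
    {z : ℂ} (hz : z ∈ ball (0:ℂ) 1) : 0 < (ss g z).re := by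
  rcases eq_or_ne z 0 with rfl | hz0
  · rw [ss_zero]; norm_num
  · have hz' : -z ∈ ball (0:ℂ) 1 := by simpa using hz
    rw [ss_eq hg hg0 hstar hz hz0]
    have h1 := hstar z hz hz0
    have h2 := hstar (-z) hz' (neg_ne_zero.2 hz0)
    simp only [Complex.sub_re, Complex.add_re, Complex.one_re]
    linarith

lemma ss_diff {g : ℂ → ℂ} (hg : AnalyticOnNhd ℂ g (ball (0:ℂ) 1)) (hg0 : g 0 = 0)
    (hg1 : deriv g 0 = 1)
    (hstar : ∀ z ∈ ball (0:ℂ) 1, z ≠ 0 → 1 / 2 < (z * deriv g z / g z).re) :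
    DifferentiableOn ℂ (ss g) (ball 0 1) := by
  apply DifferentiableOn.const_add
  apply DifferentiableOn.div
  · exact differentiableOn_id.mul ((pp_analytic hg).deriv.differentiableOn)
  · exact pp_diff hg
  · exact fun x hx => pp_ne_zero hg0 hg1 hstar hx

noncomputable def psipsi (g : ℂ → ℂ) : ℂ → ℂ := fun z => (ss g z - 1) / (ss g z + 1)

section Psi
variable {g : ℂ → ℂ} (hg : AnalyticOnNhd ℂ g (ball (0:ℂ) 1)) (hg0 : g 0 = 0)
  (hg1 : deriv g 0 = 1)
  (hstar : ∀ z ∈ ball (0:ℂ) 1, z ≠ 0 → 1 / 2 < (z * deriv g z / g z).re)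

include hg hg0 hstar

lemma ss_add_one_ne {z : ℂ} (hz : z ∈ ball (0:ℂ) 1) : ss g z + 1 ≠ 0 := by
  intro h
  have h2 : (ss g z + 1).re = 0 := by rw [h]; simp
  rw [Complex.add_re, Complex.one_re] at h2
  have := ss_re_pos hg hg0 hstar hz
  linarith

lemma psipsi_lt_one {z : ℂ} (hz : z ∈ ball (0:ℂ) 1) : ‖psipsi g z‖ < 1 := by
  rw [psipsi, norm_div, div_lt_one (by
    simpa [norm_pos_iff] using ss_add_one_ne hg hg0 hstar hz)]
  have hre := ss_re_pos hg hg0 hstar hz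
  have h1 : Complex.normSq (ss g z - 1) < Complex.normSq (ss g z + 1) := by
    simp only [Complex.normSq_apply, Complex.sub_re, Complex.sub_im, Complex.add_re,
      Complex.add_im, Complex.one_re, Complex.one_im]
    nlinarith
  have := Complex.sq_norm (ss g z - 1)
  have := Complex.sq_norm (ss g z + 1)
  nlinarith [norm_nonneg (ss g z - 1), norm_nonneg (ss g z + 1)]

omit hg hg0 hstar in
lemma psipsi_zero : psipsi g 0 = 0 := by simp [psipsi, ss_zero]

include hg1 in
lemma psipsi_diff : DifferentiableOn ℂ (psipsi g) (ball 0 1) :=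
  ((ss_diff hg hg0 hg1 hstar).sub_const 1).div ((ss_diff hg hg0 hg1 hstar).add_const 1)
    fun x hx => ss_add_one_ne hg hg0 hstar hx

include hg1 in
lemma psipsi_deriv_zero : deriv (psipsi g) 0 = 0 := by
  have hball : ball (0:ℂ) 1 ∈ 𝓝 (0:ℂ) := isOpen_ball.mem_nhds (by simp)
  have hda : DifferentiableAt ℂ (psipsi g) 0 :=
    ((psipsi_diff hg hg0 hg1 hstar) 0 (by simp)).differentiableAt hball
  have heven : psipsi g =ᶠ[𝓝 (0:ℂ)] (fun x => psipsi g (-x)) := by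
    filter_upwards [hball] with x hx
    rw [psipsi, psipsi, ss_even hg hx]
  have h0 : HasDerivAt (psipsi g) (deriv (psipsi g) 0) (-0 : ℂ) := by
    simpa using hda.hasDerivAt
  have h1 : HasDerivAt (fun x => psipsi g (-x)) (deriv (psipsi g) 0 * -1) 0 :=
    h0.comp 0 (hasDerivAt_neg (0:ℂ))
  have h2 : HasDerivAt (psipsi g) (deriv (psipsi g) 0 * -1) 0 :=
    h1.congr_of_eventuallyEq heven
  have h3 : deriv (psipsi g) 0 = deriv (psipsi g) 0 * -1 := h2.deriv
  linear_combination h3 / 2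

end Psi

lemma logderiv_re_bound {g : ℂ → ℂ} (hg : AnalyticOnNhd ℂ g (ball (0:ℂ) 1))
    (hg0 : g 0 = 0) (hg1 : deriv g 0 = 1)
    (hstar : ∀ z ∈ ball (0:ℂ) 1, z ≠ 0 → 1 / 2 < (z * deriv g z / g z).re)
    {z : ℂ} (hz : z ∈ ball (0:ℂ) 1) :
    -(2 * ‖z‖ ^ 2 / (1 + ‖z‖ ^ 2)) ≤
      (z * deriv (pp g) z / pp g z).re := by
  set ψ := psipsi g z with hψdef
  set t := ‖z‖ with ht
  have ht1 : t < 1 := mem_ball_zero_iff.1 hz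
  have ht0 : 0 ≤ t := norm_nonneg z
  have ha : ‖ψ‖ ≤ t ^ 2 :=
    schwarz_sq (psipsi_diff hg hg0 hg1 hstar) (psipsi_zero)
      (psipsi_deriv_zero hg hg0 hg1 hstar) (fun ζ hζ => psipsi_lt_one hg hg0 hstar hζ) hz
  set a := ‖ψ‖ with hadef
  have ha0 : 0 ≤ a := norm_nonneg ψ
  have ha1 : a < 1 := lt_of_le_of_lt ha (by nlinarith)
  have hone : (1 : ℂ) - ψ ≠ 0 := by
    intro h
    have : ‖1 - ψ‖ = 0 := by rw [h]; simp
    have h2 : (1:ℝ) - a ≤ ‖1 - ψ‖ := by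
      simpa using norm_sub_norm_le (1:ℂ) ψ
    rw [this] at h2; linarith
  -- s = (1+ψ)/(1-ψ)
  have hs1 : ss g z + 1 ≠ 0 := ss_add_one_ne hg hg0 hstar hz
  have hsval : ss g z = (1 + ψ) / (1 - ψ) := by
    rw [eq_div_iff hone]
    have : ψ * (ss g z + 1) = ss g z - 1 := by
      rw [hψdef, psipsi, div_mul_cancel₀ _ hs1]
    linear_combination -this
  -- real part formula
  have hre : (ss g z).re = (1 - Complex.normSq ψ) / Complex.normSq (1 - ψ) := by
    rw [hsval, Complex.div_re]
    simp only [Complex.add_re, Complex.add_im, Complex.sub_re, Complex.sub_im,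
      Complex.one_re, Complex.one_im, Complex.normSq_apply]
    rw [← add_div]
    congr 1
    ring
  have hnspos : 0 < Complex.normSq (1 - ψ) := Complex.normSq_pos.2 hone
  have hnsle : Complex.normSq (1 - ψ) ≤ (1 + a) ^ 2 := by
    have h1 : ‖1 - ψ‖ ≤ 1 + a := by
      have := norm_add_le 1 (-ψ)
      simpa [sub_eq_add_neg] using this
    have h2 := Complex.sq_norm (1 - ψ)
    nlinarith [norm_nonneg (1 - ψ)]
  have hnsψ : Complex.normSq ψ = a ^ 2 := by
    rw [← Complex.sq_norm]
  have hge : (1 - a) / (1 + a) ≤ (ss g z).re := by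
    rw [hre, hnsψ]
    have h1 : (1 - a^2) / (1 + a)^2 ≤ (1 - a^2) / Complex.normSq (1 - ψ) :=
      div_le_div_of_nonneg_left (by nlinarith) hnspos hnsle
    have h2 : (1 - a) / (1 + a) = (1 - a^2) / (1 + a)^2 := by
      rw [div_eq_div_iff (by linarith) (by positivity)]
      ring
    rw [h2]; exact h1
  have hform : (z * deriv (pp g) z / pp g z).re = (ss g z).re - 1 := by
    rw [ss]; simp [Complex.add_re]
  rw [hform]
  have hmono : -(2 * a / (1 + a)) ≥ -(2 * t^2 / (1 + t^2)) := by
    rw [ge_iff_le, neg_le_neg_iff, div_le_div_iff₀ (by linarith) (by positivity)]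
    nlinarith
  have hfinal : (1 - a) / (1 + a) - 1 = -(2 * a / (1 + a)) := by
    field_simp
    ring
  linarith

lemma pp_growth {g : ℂ → ℂ} (hg : AnalyticOnNhd ℂ g (ball (0:ℂ) 1))
    (hg0 : g 0 = 0) (hg1 : deriv g 0 = 1)
    (hstar : ∀ z ∈ ball (0:ℂ) 1, z ≠ 0 → 1 / 2 < (z * deriv g z / g z).re)
    {z : ℂ} (hz : z ∈ ball (0:ℂ) 1) :
    1 / (1 + ‖z‖ ^ 2) ≤ ‖pp g z‖ := by
  rcases eq_or_ne z 0 with rfl | hz0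
  · rw [pp_zero hg1]; norm_num
  set r := ‖z‖ with hr
  have hr0 : 0 < r := norm_pos_iff.mpr hz0
  have hr1 : r < 1 := mem_ball_zero_iff.1 hz
  set P : ℝ → ℂ := fun t => pp g ((t : ℂ) * z) with hP
  set u : ℝ → ℝ := fun t => Real.log (Complex.normSq (P t)) / 2
      + Real.log (1 + t ^ 2 * r ^ 2) with hu
  have hmem : ∀ t : ℝ, t ∈ Set.Icc (0:ℝ) 1 → ((t:ℂ) * z) ∈ ball (0:ℂ) 1 := by
    intro t ht
    rw [mem_ball_zero_iff, norm_mul, Complex.norm_real, Real.norm_eq_abs,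
      _root_.abs_of_nonneg ht.1]
    calc t * r ≤ 1 * r := by apply mul_le_mul_of_nonneg_right ht.2 hr0.le
      _ < 1 := by rwa [one_mul]
  -- derivative of u
  have hud : ∀ t ∈ Set.Icc (0:ℝ) 1, HasDerivAt u
      (((deriv (pp g) ((t:ℂ) * z) * z) / P t).re + (2 * t * r ^ 2) / (1 + t ^ 2 * r ^ 2)) t := by
    intro t ht
    have hmemt := hmem t ht
    have hPne : P t ≠ 0 := pp_ne_zero hg0 hg1 hstar hmemt
    set Q : ℂ := deriv (pp g) ((t:ℂ) * z) * z with hQ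
    have hPd : HasDerivAt P Q t := by
      have h1 : HasDerivAt (pp g) (deriv (pp g) ((t:ℂ) * z)) ((t:ℂ) * z) :=
        (((pp_diff hg) _ hmemt).differentiableAt (isOpen_ball.mem_nhds hmemt)).hasDerivAt
      have h2 : HasDerivAt (fun ζ : ℂ => pp g (ζ * z)) Q (t:ℂ) := by
        simpa [hQ, Function.comp_def] using h1.comp (t:ℂ) (hasDerivAt_mul_const z)
      exact h2.comp_ofReal
    have hre : HasDerivAt (fun s => (P s).re) Q.re t :=
      Complex.reCLM.hasFDerivAt.comp_hasDerivAt t hPd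
    have him : HasDerivAt (fun s => (P s).im) Q.im t :=
      Complex.imCLM.hasFDerivAt.comp_hasDerivAt t hPd
    have hnsq : HasDerivAt (fun s => Complex.normSq (P s))
        ((P t).re * Q.re + (P t).im * Q.im + ((P t).re * Q.re + (P t).im * Q.im)) t := by
      have : (fun s => Complex.normSq (P s))
          = fun s => (P s).re * (P s).re + (P s).im * (P s).im := by
        funext s; rw [Complex.normSq_apply]
      rw [this]
      have := (hre.mul hre).add (him.mul him)
      exact this.congr_deriv (by ring)
    have hlog1 : HasDerivAt (fun s => Real.log (Complex.normSq (P s)) / 2)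
        (((P t).re * Q.re + (P t).im * Q.im) / Complex.normSq (P t)) t := by
      have hne : Complex.normSq (P t) ≠ 0 := fun h => hPne (Complex.normSq_eq_zero.1 h)
      have := (hnsq.log hne).div_const 2
      exact this.congr_deriv (by ring)
    have hlog2 : HasDerivAt (fun s : ℝ => Real.log (1 + s ^ 2 * r ^ 2))
        ((2 * t * r ^ 2) / (1 + t ^ 2 * r ^ 2)) t := by
      have hin : HasDerivAt (fun s : ℝ => 1 + s ^ 2 * r ^ 2) (2 * t * r ^ 2) t := by
        have := ((hasDerivAt_pow 2 t).mul_const (r ^ 2)).const_add 1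
        exact this.congr_deriv (by ring)
      have hpos : (0:ℝ) < 1 + t ^ 2 * r ^ 2 := by positivity
      exact hin.log (ne_of_gt hpos)
    have := hlog1.add hlog2
    refine this.congr_deriv ?_
    congr 1
    rw [Complex.div_re]
    ring
  -- monotone
  have hmono : MonotoneOn u (Set.Icc (0:ℝ) 1) := by
    apply monotoneOn_of_deriv_nonneg (convex_Icc 0 1)
    · exact fun t ht => (hud t ht).continuousAt.continuousWithinAt
    · intro t ht
      rw [interior_Icc] at ht
      exact ((hud t (Set.mem_Icc_of_Ioo ht)).differentiableAt).differentiableWithinAt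
    · intro t ht
      rw [interior_Icc] at ht
      rw [(hud t (Set.mem_Icc_of_Ioo ht)).deriv]
      have ht0 : 0 < t := ht.1
      have hmemt := hmem t (Set.mem_Icc_of_Ioo ht)
      have hPne : P t ≠ 0 := pp_ne_zero hg0 hg1 hstar hmemt
      have hkey := logderiv_re_bound hg hg0 hg1 hstar hmemt
      have habs : ‖(t:ℂ) * z‖ = t * r := by
        rw [norm_mul, Complex.norm_real, Real.norm_eq_abs, _root_.abs_of_nonneg ht0.le]
      rw [habs] at hkey
      have hrel : ((deriv (pp g) ((t:ℂ) * z) * z) / P t).re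
          = (1 / t) * (((t:ℂ) * z) * deriv (pp g) ((t:ℂ) * z) / pp g ((t:ℂ) * z)).re := by
        have htne : (t:ℂ) ≠ 0 := Complex.ofReal_ne_zero.2 ht0.ne'
        have : ((t:ℂ) * z) * deriv (pp g) ((t:ℂ) * z) / pp g ((t:ℂ) * z)
            = (t:ℂ) * ((deriv (pp g) ((t:ℂ) * z) * z) / P t) := by
          rw [hP]; field_simp
        rw [this]
        rw [show ((t:ℂ) * ((deriv (pp g) ((t:ℂ) * z) * z) / P t)).re
          = t * ((deriv (pp g) ((t:ℂ) * z) * z) / P t).re by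
            rw [Complex.mul_re]; simp [Complex.ofReal_re, Complex.ofReal_im]]
        field_simp
      rw [hrel]
      have hb : -(2 * (t * r) ^ 2 / (1 + (t * r) ^ 2))
          ≤ (((t:ℂ) * z) * deriv (pp g) ((t:ℂ) * z) / pp g ((t:ℂ) * z)).re := hkey
      have h1 : (1 / t) * (-(2 * (t * r) ^ 2 / (1 + (t * r) ^ 2)))
          ≤ (1 / t) * (((t:ℂ) * z) * deriv (pp g) ((t:ℂ) * z) / pp g ((t:ℂ) * z)).re := by
        apply mul_le_mul_of_nonneg_left hb (by positivity)
      have h2 : (1 / t) * (-(2 * (t * r) ^ 2 / (1 + (t * r) ^ 2)))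
          = -((2 * t * r ^ 2) / (1 + t ^ 2 * r ^ 2)) := by
        rw [mul_pow]
        field_simp
      rw [h2] at h1
      linarith
  have hu01 : u 0 ≤ u 1 := hmono (by simp) (by simp) zero_le_one
  have hu0 : u 0 = 0 := by
    have : P 0 = 1 := by rw [hP]; simp [pp_zero hg1]
    simp [hu, this]
  have hPz : P 1 = pp g z := by rw [hP]; simp
  rw [hu0] at hu01
  simp only [hu, hPz, one_pow, one_mul] at hu01
  -- now extract the bound
  have hc : (0:ℝ) < 1 + r ^ 2 := by positivity
  have hnspos : 0 < Complex.normSq (pp g z) :=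
    Complex.normSq_pos.2 (pp_ne_zero hg0 hg1 hstar hz)
  have hlog : Real.log ((1 + r ^ 2)⁻¹ ^ 2) ≤ Real.log (Complex.normSq (pp g z)) := by
    rw [Real.log_pow, Real.log_inv]
    push_cast
    linarith
  have hns : (1 + r ^ 2)⁻¹ ^ 2 ≤ Complex.normSq (pp g z) :=
    (Real.log_le_log_iff (by positivity) hnspos).1 hlog
  have habs2 : ‖pp g z‖ ^ 2 = Complex.normSq (pp g z) := Complex.sq_norm _
  rw [one_div]
  nlinarith [norm_nonneg (pp g z), inv_pos.2 hc]

lemma phi_ne_zero {φ : ℂ → ℂ} (hφre : ∀ z ∈ ball (0:ℂ) 1, 0 < (φ z).re)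
    {x : ℂ} (hx : x ∈ ball (0:ℂ) 1) : φ x ≠ 0 := by
  intro h
  have := hφre x hx
  rw [h] at this
  simp at this

lemma min_modulus {φ : ℂ → ℂ} (hφ : AnalyticOnNhd ℂ φ (ball (0:ℂ) 1))
    (hφre : ∀ z ∈ ball (0:ℂ) 1, 0 < (φ z).re) {r m : ℝ} (hr0 : 0 < r) (hr1 : r < 1)
    (hml : ∀ ζ : ℂ, ‖ζ‖ = r → m ≤ ‖φ ζ‖) (hm0 : 0 < m)
    {ζ₀ : ℂ} (hζ₀ : ‖ζ₀‖ ≤ r) : m ≤ ‖φ ζ₀‖ := by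
  have hsub : closedBall (0:ℂ) r ⊆ ball 0 1 := by
    intro x hx
    rw [mem_closedBall_zero_iff] at hx
    rw [mem_ball_zero_iff]
    exact lt_of_le_of_lt hx hr1
  have hdiff : DifferentiableOn ℂ (fun ζ => (φ ζ)⁻¹) (ball (0:ℂ) 1) :=
    hφ.differentiableOn.inv fun x hx => phi_ne_zero hφre hx
  have hdc : DiffContOnCl ℂ (fun ζ => (φ ζ)⁻¹) (ball (0:ℂ) r) := by
    apply DifferentiableOn.diffContOnCl
    rw [closure_ball (0:ℂ) hr0.ne']
    exact hdiff.mono hsub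
  have hbound : ∀ x ∈ frontier (ball (0:ℂ) r), ‖(φ x)⁻¹‖ ≤ m⁻¹ := by
    intro x hx
    rw [frontier_ball (0:ℂ) hr0.ne', mem_sphere_zero_iff_norm] at hx
    have habs : ‖x‖ = r := hx
    rw [norm_inv]
    exact inv_anti₀ hm0 (hml x habs)
  have hmem : ζ₀ ∈ closure (ball (0:ℂ) r) := by
    rw [closure_ball (0:ℂ) hr0.ne', mem_closedBall_zero_iff]
    exact hζ₀
  have := Complex.norm_le_of_forall_mem_frontier_norm_le isBounded_ball hdc hbound hmem
  rw [norm_inv] at this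
  have hζball : ζ₀ ∈ ball (0:ℂ) 1 := hsub (mem_closedBall_zero_iff.2 hζ₀)
  have hpos : 0 < ‖φ ζ₀‖ := norm_pos_iff.mpr (phi_ne_zero hφre hζball)
  rwa [inv_le_inv₀ hpos hm0] at this

lemma deriv_f_eq {f g w φ : ℂ → ℂ} (hg0 : g 0 = 0)
    (hstar : ∀ z ∈ ball (0:ℂ) 1, z ≠ 0 → 1 / 2 < (z * deriv g z / g z).re)
    (hsub : ∀ z ∈ ball (0:ℂ) 1, z ≠ 0 →
      -(z ^ 2 * deriv f z) / (g z * g (-z)) = φ (w z))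
    {z : ℂ} (hz : z ∈ ball (0:ℂ) 1) (hz0 : z ≠ 0) :
    deriv f z = φ (w z) * pp g z := by
  have hz' : -z ∈ ball (0:ℂ) 1 := by simpa using hz
  have hgz : g z ≠ 0 := g_ne_zero hstar hz hz0
  have hgz' : g (-z) ≠ 0 := g_ne_zero hstar hz' (neg_ne_zero.2 hz0)
  have h := hsub z hz hz0
  rw [pp_eq hg0 z hz0, ← h]
  field_simp

theorem distortion_lower_Ks (f g w φ : ℂ → ℂ)
    (hf : AnalyticOnNhd ℂ f (ball (0:ℂ) 1)) (hf0 : f 0 = 0) (hf1 : deriv f 0 = 1)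
    (hg : AnalyticOnNhd ℂ g (ball (0:ℂ) 1)) (hg0 : g 0 = 0) (hg1 : deriv g 0 = 1)
    (hstar : ∀ z ∈ ball (0:ℂ) 1, z ≠ 0 → 1 / 2 < (z * deriv g z / g z).re)
    (hw : AnalyticOnNhd ℂ w (ball (0:ℂ) 1)) (hw0 : w 0 = 0)
    (hwb : ∀ z ∈ ball (0:ℂ) 1, ‖w z‖ < 1)
    (hφ : AnalyticOnNhd ℂ φ (ball (0:ℂ) 1)) (hφre : ∀ z ∈ ball (0:ℂ) 1, 0 < (φ z).re)
    (hsub : ∀ z ∈ ball (0:ℂ) 1, z ≠ 0 →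
      -(z ^ 2 * deriv f z) / (g z * g (-z)) = φ (w z))
    (r : ℝ) (hr : r < 1) (z : ℂ) (hz : ‖z‖ = r)
    (m : ℝ) (hm : IsLeast {x : ℝ | ∃ ζ : ℂ, ‖ζ‖ = r ∧ x = ‖φ ζ‖} m) :
    m / (1 + r ^ 2) ≤ ‖deriv f z‖ := by
  have hb0 : (0:ℂ) ∈ ball (0:ℂ) 1 := by simp
  have hzb : z ∈ ball (0:ℂ) 1 := by
    rw [mem_ball_zero_iff, hz]; exact hr
  rcases le_or_gt m 0 with hm0 | hm0
  · have h1 : m / (1 + r ^ 2) ≤ 0 :=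
      div_nonpos_of_nonpos_of_nonneg hm0 (by positivity)
    exact h1.trans (norm_nonneg _)
  rcases eq_or_ne z 0 with rfl | hz0
  · -- z = 0 case
    have hr0 : r = 0 := by rw [← hz]; simp
    subst hr0
    obtain ⟨ζ, hζ, hmval⟩ := hm.1
    have hζ0 : ζ = 0 := norm_eq_zero.mp hζ
    subst hζ0
    -- deriv f 0 = φ 0
    have hcontD : ContinuousAt (deriv f) 0 := ((hf.deriv) 0 hb0).continuousAt
    have hcontF : ContinuousAt (fun ζ => φ (w ζ) * pp g ζ) 0 := by
      apply ContinuousAt.mul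
      · apply ContinuousAt.comp
        · rw [hw0]; exact (hφ 0 hb0).continuousAt
        · exact (hw 0 hb0).continuousAt
      · exact ((pp_analytic hg) 0 hb0).continuousAt
    have heq : deriv f =ᶠ[𝓝[≠] (0:ℂ)] fun ζ => φ (w ζ) * pp g ζ := by
      have hball : ball (0:ℂ) 1 ∈ 𝓝[≠] (0:ℂ) :=
        nhdsWithin_le_nhds (isOpen_ball.mem_nhds hb0)
      filter_upwards [hball, self_mem_nhdsWithin] with ζ hζb hζne
      exact deriv_f_eq hg0 hstar hsub hζb hζne
    have htend1 : Filter.Tendsto (deriv f) (𝓝[≠] (0:ℂ)) (𝓝 (deriv f 0)) :=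
      hcontD.continuousWithinAt.tendsto
    have htend2 : Filter.Tendsto (deriv f) (𝓝[≠] (0:ℂ)) (𝓝 (φ (w 0) * pp g 0)) :=
      (hcontF.continuousWithinAt.tendsto).congr' heq.symm
    have hD : deriv f 0 = φ (w 0) * pp g 0 := tendsto_nhds_unique htend1 htend2
    rw [hw0, pp_zero hg1, mul_one] at hD
    rw [hf1] at hD
    have : m = 1 := by
      rw [hmval, ← hD]; simp
    rw [this, hf1]
    norm_num
  · -- z ≠ 0 case
    have hr0 : 0 < r := by rw [← hz]; exact norm_pos_iff.mpr hz0
    have hml : ∀ ζ : ℂ, ‖ζ‖ = r → m ≤ ‖φ ζ‖ := by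
      intro ζ hζ
      exact hm.2 ⟨ζ, hζ, rfl⟩
    have hwz : ‖w z‖ ≤ r := by
      rw [← hz]
      apply Complex.norm_le_norm_of_mapsTo_ball hw.differentiableOn
      · intro x hx
        rw [mem_closedBall_zero_iff]
        exact (hwb x hx).le
      · exact hw0
      · rw [hz]; exact hr
    have hφwz : m ≤ ‖φ (w z)‖ := min_modulus hφ hφre hr0 hr hml hm0 hwz
    have hgrow : 1 / (1 + r ^ 2) ≤ ‖pp g z‖ := by
      have := pp_growth hg hg0 hg1 hstar hzb
      rwa [hz] at this
    have hEq : deriv f z = φ (w z) * pp g z := deriv_f_eq hg0 hstar hsub hzb hz0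
    calc m / (1 + r ^ 2) = m * (1 / (1 + r ^ 2)) := by ring
      _ ≤ ‖φ (w z)‖ * ‖pp g z‖ := by
          apply mul_le_mul hφwz hgrow (by positivity) (norm_nonneg _)
      _ = ‖deriv f z‖ := by rw [hEq, norm_mul]
end

section
/- The function g₁(z) = z/√(1+z²) (principal branch) is analytic on the unit disk, normalized, and starlike of order 1/2, and it satisfies -g₁(z)g₁(-z)/z = z/(1+z²). -/
open Complex Metric

lemma g1_sq_lt {z : ℂ} (hz : z ∈ ball (0:ℂ) 1) : z.re ^ 2 + z.im ^ 2 < 1 := by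
  rw [mem_ball_zero_iff] at hz
  have h1 : Complex.normSq z < 1 := by
    have : ‖z‖ < 1 := hz
    nlinarith [Complex.sq_norm z, norm_nonneg z]
  nlinarith [Complex.normSq_apply z]

lemma g1_slit {z : ℂ} (hz : z ∈ ball (0:ℂ) 1) : (1 + z ^ 2) ∈ Complex.slitPlane := by
  have hsq := g1_sq_lt hz
  rw [Complex.mem_slitPlane_iff]
  by_cases him : (1 + z ^ 2).im = 0
  · left
    have him' : z.re * z.im = 0 := by
      simp only [Complex.add_im, Complex.one_im, pow_two, Complex.mul_im] at him
      linarith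
    have hre : (1 + z ^ 2).re = 1 + (z.re * z.re - z.im * z.im) := by
      simp [pow_two, Complex.mul_re]
    rw [hre]
    rcases mul_eq_zero.mp him' with h | h <;>
      nlinarith [sq_nonneg z.re, sq_nonneg z.im]
  · right; exact him

lemma g1_w_ne {z : ℂ} (hz : z ∈ ball (0:ℂ) 1) : (1 + z ^ 2) ≠ 0 :=
  Complex.slitPlane_ne_zero (g1_slit hz)

lemma g1_H_ne {z : ℂ} (hz : z ∈ ball (0:ℂ) 1) : (1 + z ^ 2) ^ ((1:ℂ)/2) ≠ 0 := by
  simp [Complex.cpow_eq_zero_iff, g1_w_ne hz]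

lemma g1_H_sq {z : ℂ} (hz : z ∈ ball (0:ℂ) 1) :
    (1 + z ^ 2) ^ ((1:ℂ)/2) * (1 + z ^ 2) ^ ((1:ℂ)/2) = 1 + z ^ 2 := by
  rw [← Complex.cpow_add _ _ (g1_w_ne hz)]
  norm_num

lemma g1_hasDeriv {z : ℂ} (hz : z ∈ ball (0:ℂ) 1) :
    HasDerivAt (fun w : ℂ => w / (1 + w ^ 2) ^ ((1:ℂ)/2))
      ((1 * ((1 + z ^ 2) ^ ((1:ℂ)/2)) -
        z * ((1/2) * (1 + z ^ 2) ^ ((1:ℂ)/2 - 1) * (0 + 2 * z))) /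
        ((1 + z ^ 2) ^ ((1:ℂ)/2)) ^ 2) z := by
  have hbase : HasDerivAt (fun w : ℂ => 1 + w ^ 2) (0 + 2 * z) z := by
    have h2 : HasDerivAt (fun w : ℂ => w ^ 2) (2 * z) z := by
      simpa using hasDerivAt_pow 2 z
    exact (hasDerivAt_const z (1:ℂ)).add h2
  have hH : HasDerivAt (fun w : ℂ => (1 + w ^ 2) ^ ((1:ℂ)/2))
      ((1/2) * (1 + z ^ 2) ^ ((1:ℂ)/2 - 1) * (0 + 2 * z)) z :=
    hbase.cpow_const (g1_slit hz)
  exact (hasDerivAt_id z).div hH (g1_H_ne hz)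

theorem extremal_function_g1 (g₁ : ℂ → ℂ)
    (hg₁ : ∀ z : ℂ, g₁ z = z / (1 + z ^ 2) ^ ((1 : ℂ) / 2)) :
    AnalyticOnNhd ℂ g₁ (ball (0:ℂ) 1) ∧
    g₁ 0 = 0 ∧ deriv g₁ 0 = 1 ∧
    (∀ z ∈ ball (0:ℂ) 1, z ≠ 0 → 1 / 2 < (z * deriv g₁ z / g₁ z).re) ∧
    (∀ z ∈ ball (0:ℂ) 1, z ≠ 0 → -(g₁ z * g₁ (-z)) / z = z / (1 + z ^ 2)) := by
  have hfun : g₁ = fun z : ℂ => z / (1 + z ^ 2) ^ ((1:ℂ)/2) := funext hg₁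
  subst hfun
  have h0ball : (0:ℂ) ∈ ball (0:ℂ) 1 := by simp
  refine ⟨?_, by simp, ?_, ?_, ?_⟩
  · intro z hz
    exact (analyticAt_id).div
      ((analyticAt_const.add (analyticAt_id.pow 2)).cpow analyticAt_const (g1_slit hz))
      (g1_H_ne hz)
  · have := (g1_hasDeriv h0ball).deriv
    rw [this]
    norm_num
  · intro z hz hz0
    rw [(g1_hasDeriv hz).deriv]
    beta_reduce
    set H := (1 + z ^ 2) ^ ((1:ℂ)/2) with hHdef
    have h12 : (1 + z ^ 2) ^ ((1:ℂ)/2 - 1) = H⁻¹ := by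
      rw [show (1:ℂ)/2 - 1 = -(1/2) by ring, Complex.cpow_neg, hHdef]
    have hHne : H ≠ 0 := g1_H_ne hz
    have hHsq : H * H = 1 + z ^ 2 := g1_H_sq hz
    have hwne : (1 + z ^ 2) ≠ 0 := g1_w_ne hz
    have hnum : 1 * H - z * ((1/2) * (1 + z ^ 2) ^ ((1:ℂ)/2 - 1) * (0 + 2 * z)) = H⁻¹ := by
      rw [h12]
      refine (inv_eq_of_mul_eq_one_right ?_).symm
      have expand : H * (1 * H - z * ((1/2) * H⁻¹ * (0 + 2 * z))) =
          H * H - (H * H⁻¹) * z ^ 2 := by ring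
      rw [expand, mul_inv_cancel₀ hHne, hHsq]
      ring
    rw [hnum]
    have key : z * (H⁻¹ / H ^ 2) / (z / H) = (1 + z ^ 2)⁻¹ := by
      rw [← hHsq]
      field_simp
    rw [key, Complex.inv_re]
    have hpos : 0 < Complex.normSq (1 + z ^ 2) := Complex.normSq_pos.mpr hwne
    rw [lt_div_iff₀ hpos]
    have hsq := g1_sq_lt hz
    simp only [Complex.normSq_apply, Complex.add_re, Complex.add_im, Complex.one_re,
      Complex.one_im, pow_two, Complex.mul_re, Complex.mul_im]
    nlinarith [sq_nonneg (z.re * z.re + z.im * z.im), sq_nonneg (z.re * z.im)]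
  · intro z hz hz0
    beta_reduce
    have hHne := g1_H_ne hz
    have hHsq := g1_H_sq hz
    have hwne := g1_w_ne hz
    rw [neg_sq]
    set H := (1 + z ^ 2) ^ ((1:ℂ)/2) with hHdef
    rw [← hHsq]
    field_simp
end

section
/- Let f be analytic, injective and normalized on the unit disk, and g starlike of order 1/2. Suppose there is δ > 0 such that for every t ∈ (0,δ) the function z ↦ f(z) + t·g(z)g(-z)/z (extended analytically at 0) is subordinate to f on 𝔻. Then Re(z²f'(z)/(g(z)g(-z))) < 0 for all z ∈ 𝔻 \ {0}, i.e., f ∈ K_s. -/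
open Complex Metric

/-- Key pointwise inequality obtained from the subordination condition via the
local inverse of `f` at `z` and the Schwarz lemma. -/
lemma stepD_re_nonpos (f G : ℂ → ℂ)
    (hf : AnalyticOnNhd ℂ f (ball (0:ℂ) 1))
    (hinj : Set.InjOn f (ball (0:ℂ) 1))
    (δ : ℝ) (hδ : 0 < δ)
    (hsub : ∀ t ∈ Set.Ioo (0:ℝ) δ, ∃ ω : ℂ → ℂ,
      AnalyticOnNhd ℂ ω (ball (0:ℂ) 1) ∧ ω 0 = 0 ∧
      (∀ z ∈ ball (0:ℂ) 1, ‖ω z‖ < 1) ∧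
      (∀ z ∈ ball (0:ℂ) 1, f z + (t : ℂ) * G z = f (ω z)))
    (z : ℂ) (hzb : z ∈ ball (0:ℂ) 1) (hfz : deriv f z ≠ 0) :
    ((starRingEnd ℂ) z * (G z * (deriv f z)⁻¹)).re ≤ 0 := by
  -- strict derivative of `f` at `z`
  obtain ⟨p, hp⟩ := hf z hzb
  have hsd : HasStrictDerivAt f (deriv f z) z := hp.deriv ▸ hp.hasStrictDerivAt
  set φ : ℂ → ℂ := hsd.localInverse f (deriv f z) z hfz with hφdef
  have hφfz : φ (f z) = z :=
    (hsd.hasStrictFDerivAt_equiv hfz).localInverse_apply_image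
  have hφd : HasStrictDerivAt φ (deriv f z)⁻¹ (f z) := hsd.to_localInverse hfz
  -- the path `c t = f z + t • G z` and `ψ = φ ∘ c`
  set c : ℝ → ℂ := fun t => f z + t • G z with hcdef
  have hc0 : c 0 = f z := by simp [hcdef]
  set ψ : ℝ → ℂ := fun t => φ (c t) with hψdef
  have hψ0 : ψ 0 = z := by rw [hψdef]; simp only [hc0]; exact hφfz
  have hcd : HasDerivAt c (G z) 0 := by
    have h1 : HasDerivAt (fun t : ℝ => t • G z) ((1:ℝ) • G z) 0 :=
      (hasDerivAt_id (0:ℝ)).smul_const (G z)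
    simpa [hcdef, one_smul] using h1.const_add (f z)
  have hψd : HasDerivAt ψ (G z * (deriv f z)⁻¹) 0 := by
    have hφF := (hφd.hasDerivAt.hasFDerivAt.restrictScalars ℝ)
    rw [← hc0] at hφF
    have hcomp := hφF.comp_hasDerivAt (0:ℝ) hcd
    have hcomp' : HasDerivAt (φ ∘ c) (G z * (deriv f z)⁻¹) 0 := by
      simpa [Function.comp, ContinuousLinearMap.coe_restrictScalars',
        ContinuousLinearMap.smulRight_apply, smul_eq_mul, mul_comm] using hcomp
    exact hcomp'
  -- the slope function
  set u : ℝ → ℂ := fun t => t⁻¹ • (ψ t - z) with hudef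
  have hu : Filter.Tendsto u (nhdsWithin 0 (Set.Ioi 0)) (nhds (G z * (deriv f z)⁻¹)) := by
    have h1 := hasDerivAt_iff_tendsto_slope.mp hψd
    have h2 : Filter.Tendsto (slope ψ 0) (nhdsWithin 0 (Set.Ioi 0))
        (nhds (G z * (deriv f z)⁻¹)) :=
      h1.mono_left (nhdsWithin_mono 0 (fun x hx => ne_of_gt hx))
    refine h2.congr (fun t => ?_)
    simp [slope_def_module, hudef, hψ0]
  -- tendsto of `c` and `ψ`
  have hcc : Filter.Tendsto c (nhdsWithin 0 (Set.Ioi 0)) (nhds (f z)) := by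
    have : Continuous c := continuous_const.add (continuous_id.smul continuous_const)
    have h2 : Filter.Tendsto c (nhdsWithin 0 (Set.Ioi 0)) (nhds (c 0)) :=
      (this.tendsto 0).mono_left nhdsWithin_le_nhds
    rwa [hc0] at h2
  have hψc : Filter.Tendsto ψ (nhdsWithin 0 (Set.Ioi 0)) (nhds z) := by
    have hφc : ContinuousAt φ (f z) := hφd.hasDerivAt.continuousAt
    have := (hφc.tendsto.comp hcc)
    rwa [hφfz] at this
  -- eventual facts
  have E1 : ∀ᶠ t in nhdsWithin 0 (Set.Ioi 0), t ∈ Set.Ioo (0:ℝ) δ :=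
    Ioo_mem_nhdsGT_of_mem ⟨le_refl 0, hδ⟩
  have E2 : ∀ᶠ t in nhdsWithin 0 (Set.Ioi 0), f (φ (c t)) = c t :=
    hcc.eventually (hsd.hasStrictFDerivAt_equiv hfz).eventually_right_inverse
  have E3 : ∀ᶠ t in nhdsWithin 0 (Set.Ioi 0), ψ t ∈ ball (0:ℂ) 1 :=
    hψc.eventually (isOpen_ball.eventually_mem hzb)
  have Ekey : ∀ᶠ t in nhdsWithin 0 (Set.Ioi 0),
      ((starRingEnd ℂ) z * u t).re ≤ 0 := by
    filter_upwards [E1, E2, E3] with t ht1 ht2 ht3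
    obtain ⟨ω, hωa, hω0, hωb, hωf⟩ := hsub t ht1
    have hct : c t = f (ω z) := by
      rw [← hωf z hzb, hcdef]
      simp [Complex.real_smul]
    have hωzb : ω z ∈ ball (0:ℂ) 1 := mem_ball_zero_iff.2 (hωb z hzb)
    have hψω : ψ t = ω z := by
      apply hinj ht3 hωzb
      show f (φ (c t)) = f (ω z)
      rw [ht2, hct]
    -- Schwarz lemma
    have habs : ‖ω z‖ ≤ ‖z‖ := by
      refine Complex.norm_le_norm_of_mapsTo_ball
        (fun w hw => ((hωa w hw).differentiableAt.differentiableWithinAt)) ?_ hω0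
        (mem_ball_zero_iff.1 hzb)
      exact fun w hw => ball_subset_closedBall (mem_ball_zero_iff.2 (hωb w hw))
    have habs' : ‖ψ t‖ ≤ ‖z‖ := by rw [hψω]; exact habs
    have hns : Complex.normSq (ψ t) ≤ Complex.normSq z := by
      rw [← Complex.sq_norm, ← Complex.sq_norm]
      exact pow_le_pow_left₀ (norm_nonneg _) habs' 2
    -- expand
    set W : ℂ := ψ t - z with hWdef
    have hzW : z + W = ψ t := by rw [hWdef]; ring
    have hexp : Complex.normSq z + Complex.normSq W + 2 * (z * (starRingEnd ℂ) W).re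
        ≤ Complex.normSq z := by
      rw [← Complex.normSq_add, hzW]; exact hns
    have hre1 : (z * (starRingEnd ℂ) W).re ≤ 0 := by
      have := Complex.normSq_nonneg W
      linarith
    have hre2 : ((starRingEnd ℂ) z * W).re = (z * (starRingEnd ℂ) W).re := by
      have : (starRingEnd ℂ) z * W = (starRingEnd ℂ) (z * (starRingEnd ℂ) W) := by
        rw [map_mul]; simp
      rw [this, Complex.conj_re]
    have htpos : (0:ℝ) < t := ht1.1
    have : (starRingEnd ℂ) z * u t = t⁻¹ • ((starRingEnd ℂ) z * W) := by
      show (starRingEnd ℂ) z * (t⁻¹ • W) = t⁻¹ • ((starRingEnd ℂ) z * W)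
      exact mul_smul_comm _ _ _
    rw [this, Complex.smul_re]
    exact mul_nonpos_of_nonneg_of_nonpos (le_of_lt (inv_pos.2 htpos)) (hre2 ▸ hre1)
  -- pass to the limit
  have hcont : Filter.Tendsto (fun t => ((starRingEnd ℂ) z * u t).re)
      (nhdsWithin 0 (Set.Ioi 0)) (nhds (((starRingEnd ℂ) z * (G z * (deriv f z)⁻¹)).re)) := by
    exact (Complex.continuous_re.tendsto _).comp ((continuous_const.mul continuous_id).tendsto _ |>.comp hu)
  exact le_of_tendsto hcont Ekey

theorem subordination_implies_Ks (f g : ℂ → ℂ)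
    (hf : AnalyticOnNhd ℂ f (ball (0:ℂ) 1)) (hf0 : f 0 = 0) (hf1 : deriv f 0 = 1)
    (hinj : Set.InjOn f (ball (0:ℂ) 1))
    (hg : AnalyticOnNhd ℂ g (ball (0:ℂ) 1)) (hg0 : g 0 = 0) (hg1 : deriv g 0 = 1)
    (hstar : ∀ z ∈ ball (0:ℂ) 1, z ≠ 0 → 1 / 2 < (z * deriv g z / g z).re)
    (G : ℂ → ℂ)
    (hG : ∀ z : ℂ, z ≠ 0 → G z = g z * g (-z) / z) (hG0 : G 0 = 0)
    (δ : ℝ) (hδ : 0 < δ)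
    (hsub : ∀ t ∈ Set.Ioo (0:ℝ) δ, ∃ ω : ℂ → ℂ,
      AnalyticOnNhd ℂ ω (ball (0:ℂ) 1) ∧ ω 0 = 0 ∧
      (∀ z ∈ ball (0:ℂ) 1, ‖ω z‖ < 1) ∧
      (∀ z ∈ ball (0:ℂ) 1, f z + (t : ℂ) * G z = f (ω z))) :
    ∀ z ∈ ball (0:ℂ) 1, z ≠ 0 →
      (z ^ 2 * deriv f z / (g z * g (-z))).re < 0 := by
  have hb0 : (0:ℂ) ∈ ball (0:ℂ) 1 := mem_ball_self one_pos
  have hnegmem : ∀ w : ℂ, w ∈ ball (0:ℂ) 1 → -w ∈ ball (0:ℂ) 1 := by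
    intro w hw
    rw [mem_ball_zero_iff] at *
    simpa using hw
  have hgne : ∀ w ∈ ball (0:ℂ) 1, w ≠ 0 → g w ≠ 0 := by
    intro w hw hw0 hgw
    have := hstar w hw hw0
    rw [hgw] at this
    simp at this
    linarith
  set h : ℂ → ℂ := dslope g 0 with hhdef
  have hgh : ∀ w : ℂ, g w = w * h w := by
    intro w
    have h1 := sub_smul_dslope g 0 w
    rw [hg0, sub_zero, sub_zero, smul_eq_mul] at h1
    exact h1.symm
  have hh0 : h 0 = 1 := by rw [hhdef, dslope_same, hg1]
  have hhana : ∀ w ∈ ball (0:ℂ) 1, AnalyticAt ℂ h w := by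
    intro w hw
    rcases eq_or_ne w 0 with rfl | hw0
    · obtain ⟨p, hp⟩ := hg 0 hb0
      exact hp.has_fpower_series_dslope_fslope.analyticAt
    · have ha : AnalyticAt ℂ (fun x : ℂ => (g x - g 0) / (x - 0)) w :=
        ((hg w hw).sub analyticAt_const).div
          ((analyticAt_id).sub analyticAt_const) (by simpa using hw0)
      refine ha.congr ?_
      filter_upwards [dslope_eventuallyEq_slope_of_ne g hw0] with x hx
      show (g x - g 0) / (x - 0) = h x
      rw [hhdef, hx, slope_def_field]
  have hhne : ∀ w ∈ ball (0:ℂ) 1, h w ≠ 0 := by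
    intro w hw
    rcases eq_or_ne w 0 with rfl | hw0
    · rw [hh0]; exact one_ne_zero
    · intro hcon
      apply hgne w hw hw0
      rw [hgh w, hcon, mul_zero]
  set P : ℂ → ℂ := fun w => -deriv f w / (h w * h (-w)) with hPdef
  have hPana : ∀ w ∈ ball (0:ℂ) 1, AnalyticAt ℂ P w := by
    intro w hw
    have h1 : AnalyticAt ℂ (deriv f) w := hf.deriv w hw
    have h2 : AnalyticAt ℂ h w := hhana w hw
    have h3 : AnalyticAt ℂ (fun x => h (-x)) w := by
      have hneg : AnalyticAt ℂ (fun x : ℂ => -x) w := analyticAt_id.neg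
      have := (hhana (-w) (hnegmem w hw)).comp hneg
      exact this
    exact h1.neg.div (h2.mul h3) (mul_ne_zero (hhne w hw) (hhne (-w) (hnegmem w hw)))
  have hPeq : ∀ w ∈ ball (0:ℂ) 1, w ≠ 0 →
      w ^ 2 * deriv f w / (g w * g (-w)) = P w := by
    intro w hw hw0
    have hd : g w * g (-w) = -(w ^ 2 * (h w * h (-w))) := by
      rw [hgh w, hgh (-w)]; ring
    have hne : h w * h (-w) ≠ 0 :=
      mul_ne_zero (hhne w hw) (hhne (-w) (hnegmem w hw))
    rw [hd]
    show w ^ 2 * deriv f w / -(w ^ 2 * (h w * h (-w))) = -deriv f w / (h w * h (-w))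
    field_simp
  have hPle : ∀ w ∈ ball (0:ℂ) 1, (P w).re ≤ 0 := by
    intro w hw
    rcases eq_or_ne w 0 with rfl | hw0
    · have : P 0 = -1 := by
        show -deriv f 0 / (h 0 * h (-0)) = -1
        rw [hf1, neg_zero, hh0]
        norm_num
      rw [this]
      norm_num
    rcases eq_or_ne (deriv f w) 0 with hfw | hfw
    · have : P w = 0 := by
        show -deriv f w / (h w * h (-w)) = 0
        rw [hfw, neg_zero, zero_div]
      rw [this]; simp
    · have hne : h w * h (-w) ≠ 0 :=
        mul_ne_zero (hhne w hw) (hhne (-w) (hnegmem w hw))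
      have hGw : G w = -(w * (h w * h (-w))) := by
        rw [hG w hw0, hgh w, hgh (-w)]
        field_simp
      have hGne : G w ≠ 0 := by
        rw [hGw]
        exact neg_ne_zero.2 (mul_ne_zero hw0 hne)
      have hA := stepD_re_nonpos f G hf hinj δ hδ hsub w hw hfw
      set A : ℂ := (starRingEnd ℂ) w * (G w * (deriv f w)⁻¹) with hAdef
      have hcne : (starRingEnd ℂ) w ≠ 0 := by
        simpa using hw0
      have hAne : A ≠ 0 :=
        mul_ne_zero hcne (mul_ne_zero hGne (inv_ne_zero hfw))
      have hPA : P w = (Complex.normSq w : ℂ) / A := by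
        rw [← Complex.mul_conj, hAdef]
        show -deriv f w / (h w * h (-w)) = _
        rw [hGw]
        field_simp
      rw [hPA, Complex.div_re]
      simp only [Complex.ofReal_re, Complex.ofReal_im, zero_mul, zero_div, add_zero]
      have h1 : Complex.normSq w * A.re ≤ 0 :=
        mul_nonpos_of_nonneg_of_nonpos (Complex.normSq_nonneg w) hA
      exact div_nonpos_of_nonpos_of_nonneg h1 (Complex.normSq_nonneg A)
  intro z hz hz0
  rw [hPeq z hz hz0]
  by_contra hcon
  push_neg at hcon
  have hPz0 : (P z).re = 0 := le_antisymm (hPle z hz) hcon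
  set q : ℂ → ℂ := fun w => Complex.exp (P w) with hqdef
  have hqd : DifferentiableOn ℂ q (ball (0:ℂ) 1) := fun w hw =>
    ((hPana w hw).differentiableAt).cexp.differentiableWithinAt
  have hmax : IsMaxOn (norm ∘ q) (ball (0:ℂ) 1) z := by
    rw [isMaxOn_iff]
    intro w hw
    show ‖Complex.exp (P w)‖ ≤ ‖Complex.exp (P z)‖
    rw [Complex.norm_exp, Complex.norm_exp, hPz0]
    exact Real.exp_le_exp.mpr (hPle w hw)
  have heq := Complex.eqOn_of_isPreconnected_of_isMaxOn_norm
    (convex_ball (0:ℂ) 1).isPreconnected isOpen_ball hqd hz hmax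
  have h01 : q 0 = q z := heq hb0
  have hP0 : P 0 = -1 := by
    show -deriv f 0 / (h 0 * h (-0)) = -1
    rw [hf1, neg_zero, hh0]
    norm_num
  have hq0 : ‖q 0‖ = Real.exp (-1) := by
    show ‖Complex.exp (P 0)‖ = _
    rw [Complex.norm_exp, hP0]
    norm_num
  have hqz : ‖q z‖ = Real.exp 0 := by
    show ‖Complex.exp (P z)‖ = _
    rw [Complex.norm_exp, hPz0]
  rw [h01, hqz] at hq0
  have := Real.exp_lt_exp.2 (by norm_num : (-1:ℝ) < 0)
  linarith
end
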